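/- arXiv:2004.05157 — 6 statements merged into one kernel-verified Lean document; each statement's English description precedes it below -/
import Mathlib

section
/- Let k ≥ 3 be an integer and define a : ℕ → ℕ by a(0) = k and a(n+1) = a(n)·(a(n) − 1). Then the sequence a(n)^{1/2^n} is strictly decreasing, hence converges to a limit θ_k, this limit satisfies 2.33 < θ_k < k, and moreover a(n) > θ_k^{2^n} for all n ≥ 0. -/
/-- **Asymptotics of wild generation sizes** (Lemma on wild flies, parts i–ii):
if `a 0 = k ≥ 3` and `a (n+1) = a n * (a n - 1)`, then the sequence
`a(n)^(1/2^n)` is strictly decreasing, hence converges to a limit `θ_k` with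
`2.33 < θ_k < k`, and `θ_k^(2^n) < a n` for all `n`. -/
theorem wild_flies_asymptotics (k : ℕ) (hk : 3 ≤ k) (a : ℕ → ℕ)
    (ha0 : a 0 = k) (ha : ∀ n, a (n + 1) = a n * (a n - 1)) :
    StrictAnti (fun n : ℕ => (a n : ℝ) ^ ((1 : ℝ) / 2 ^ n)) ∧
    ∃ θ : ℝ,
      Filter.Tendsto (fun n : ℕ => (a n : ℝ) ^ ((1 : ℝ) / 2 ^ n))
        Filter.atTop (nhds θ) ∧
      (2.33 : ℝ) < θ ∧ θ < (k : ℝ) ∧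
      ∀ n : ℕ, θ ^ (2 ^ n) < (a n : ℝ) := by
  set b : ℕ → ℝ := fun n : ℕ => (a n : ℝ) ^ ((1 : ℝ) / 2 ^ n) with hb
  -- a n ≥ 3 for all n
  have h3 : ∀ n, 3 ≤ a n := by
    intro n
    induction n with
    | zero => omega
    | succ n ih =>
      rw [ha]
      have := Nat.mul_le_mul ih (show 2 ≤ a n - 1 by omega)
      omega
  -- cast of recurrence
  have hcast : ∀ n, (a (n + 1) : ℝ) = (a n : ℝ) * ((a n : ℝ) - 1) := by
    intro n
    rw [ha n, Nat.cast_mul, Nat.cast_sub (by have := h3 n; omega), Nat.cast_one]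
  have hc3 : ∀ n, (3 : ℝ) ≤ (a n : ℝ) := by
    intro n; exact_mod_cast h3 n
  -- key step: b (n+1) < b n
  have key : ∀ n, b (n + 1) < b n := by
    intro n
    have hx := hc3 n
    have hlt : (a (n + 1) : ℝ) < (a n : ℝ) ^ 2 := by
      rw [hcast]; nlinarith
    have h1 : b (n + 1) < ((a n : ℝ) ^ 2) ^ ((1 : ℝ) / 2 ^ (n + 1)) := by
      apply Real.rpow_lt_rpow (by positivity) hlt (by positivity)
    have h2 : ((a n : ℝ) ^ 2) ^ ((1 : ℝ) / 2 ^ (n + 1)) = b n := by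
      rw [← Real.rpow_natCast (a n : ℝ) 2, ← Real.rpow_mul (by positivity)]
      congr 1
      rw [pow_succ]
      push_cast
      field_simp
    rwa [h2] at h1
  have hanti : StrictAnti b := strictAnti_nat_of_succ_lt key
  refine ⟨hanti, ?_⟩
  -- the limit
  have hbdd : BddBelow (Set.range b) := by
    refine ⟨0, ?_⟩
    rintro _ ⟨n, rfl⟩
    positivity
  set θ : ℝ := ⨅ n, b n with hθ
  have hT : Filter.Tendsto b Filter.atTop (nhds θ) :=
    tendsto_atTop_ciInf hanti.antitone hbdd
  have hle : ∀ n, θ ≤ b n := fun n => ciInf_le hbdd n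
  have hltb : ∀ n, θ < b n := fun n => lt_of_le_of_lt (hle (n + 1)) (key n)
  -- lower bound via (a n - 1)
  have hN : ∀ n m, (a n - 1) ^ (2 ^ m) ≤ a (n + m) - 1 := by
    intro n m
    induction m with
    | zero => simp
    | succ m ih =>
      have step : (a (n + m) - 1) ^ 2 ≤ a (n + m + 1) - 1 := by
        rw [ha]
        obtain ⟨z, hz⟩ : ∃ z, a (n + m) = z + 3 := ⟨a (n + m) - 3, by have := h3 (n + m); omega⟩
        rw [hz]
        have e1 : (z + 3 - 1) ^ 2 = z * z + 4 * z + 4 := by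
          have h : z + 3 - 1 = z + 2 := by omega
          rw [h]; ring
        have e2 : (z + 3) * (z + 3 - 1) = z * z + 5 * z + 6 := by
          have h : z + 3 - 1 = z + 2 := by omega
          rw [h]; ring
        omega
      calc (a n - 1) ^ 2 ^ (m + 1) = ((a n - 1) ^ 2 ^ m) ^ 2 := by
            rw [← pow_mul, pow_succ]
        _ ≤ (a (n + m) - 1) ^ 2 := Nat.pow_le_pow_left ih 2
        _ ≤ a (n + m + 1) - 1 := step
  -- a 3 ≥ 870
  have ha1 : 6 ≤ a 1 := by
    rw [ha 0, ha0]
    calc 6 = 3 * 2 := rfl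
      _ ≤ k * (k - 1) := Nat.mul_le_mul hk (by omega)
  have ha2 : 30 ≤ a 2 := by
    rw [ha 1]
    calc 30 = 6 * 5 := rfl
      _ ≤ a 1 * (a 1 - 1) := Nat.mul_le_mul ha1 (by omega)
  have ha3 : 870 ≤ a 3 := by
    rw [ha 2]
    calc 870 = 30 * 29 := rfl
      _ ≤ a 2 * (a 2 - 1) := Nat.mul_le_mul ha2 (by omega)
  set c : ℝ := ((a 3 : ℝ) - 1) ^ ((1 : ℝ) / 8) with hcdef
  have ha3R : (869 : ℝ) ≤ (a 3 : ℝ) - 1 := by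
    have h870 : (870 : ℝ) ≤ (a 3 : ℝ) := by exact_mod_cast ha3
    linarith
  -- c ≤ b (3 + m) for all m
  have hcb : ∀ m, c ≤ b (3 + m) := by
    intro m
    have hbnd : ((a 3 : ℝ) - 1) ^ (2 ^ m : ℕ) ≤ (a (3 + m) : ℝ) := by
      have h1 : ((a 3 - 1 : ℕ) : ℝ) ^ (2 ^ m : ℕ) ≤ ((a (3 + m) - 1 : ℕ) : ℝ) := by
        exact_mod_cast hN 3 m
      have h2 : ((a 3 - 1 : ℕ) : ℝ) = (a 3 : ℝ) - 1 := by
        rw [Nat.cast_sub (by have := h3 3; omega), Nat.cast_one]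
      have h3' : ((a (3 + m) - 1 : ℕ) : ℝ) ≤ (a (3 + m) : ℝ) := by
        exact_mod_cast Nat.sub_le _ _
      rw [h2] at h1
      linarith
    have hpos : (0 : ℝ) ≤ ((a 3 : ℝ) - 1) ^ (2 ^ m : ℕ) := by positivity
    have h4 : (((a 3 : ℝ) - 1) ^ (2 ^ m : ℕ)) ^ ((1 : ℝ) / 2 ^ (3 + m)) ≤ b (3 + m) :=
      Real.rpow_le_rpow hpos hbnd (by positivity)
    have h5 : (((a 3 : ℝ) - 1) ^ (2 ^ m : ℕ)) ^ ((1 : ℝ) / 2 ^ (3 + m)) = c := by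
      rw [← Real.rpow_natCast ((a 3 : ℝ) - 1) (2 ^ m), ← Real.rpow_mul (by linarith)]
      congr 1
      rw [pow_add]
      push_cast
      field_simp
      ring
    rwa [h5] at h4
  -- 2.33 < c
  have hc233 : (2.33 : ℝ) < c := by
    have h869 : (2.33 : ℝ) ^ (8 : ℕ) < 869 := by norm_num
    have h1 : ((2.33 : ℝ) ^ (8 : ℕ)) ^ ((1 : ℝ) / 8) < ((a 3 : ℝ) - 1) ^ ((1 : ℝ) / 8) := by
      apply Real.rpow_lt_rpow (by positivity) (by linarith) (by norm_num)
    have h2 : ((2.33 : ℝ) ^ (8 : ℕ)) ^ ((1 : ℝ) / 8) = (2.33 : ℝ) := by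
      rw [← Real.rpow_natCast (2.33 : ℝ) 8, ← Real.rpow_mul (by norm_num)]
      norm_num
    rwa [h2] at h1
  have hθc : c ≤ θ := by
    apply ge_of_tendsto hT
    filter_upwards [Filter.eventually_ge_atTop 3] with m hm
    obtain ⟨j, rfl⟩ : ∃ j, m = 3 + j := ⟨m - 3, by omega⟩
    exact hcb j
  have hθ233 : (2.33 : ℝ) < θ := lt_of_lt_of_le hc233 hθc
  refine ⟨θ, hT, hθ233, ?_, ?_⟩
  · -- θ < k
    have hb0 : b 0 = (k : ℝ) := by
      simp [hb, ha0]
    have h := hltb 0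
    rwa [hb0] at h
  · -- θ ^ 2^n < a n
    intro n
    have hθ0 : 0 ≤ θ := by linarith
    have hpow : θ ^ (2 ^ n) < (b n) ^ (2 ^ n) :=
      pow_lt_pow_left₀ (hltb n) hθ0 (by positivity)
    have hbn : (b n) ^ (2 ^ n) = (a n : ℝ) := by
      rw [hb]
      simp only
      rw [← Real.rpow_natCast ((a n : ℝ) ^ ((1 : ℝ) / 2 ^ n)) (2 ^ n),
        ← Real.rpow_mul (by positivity)]
      rw [show ((1 : ℝ) / 2 ^ n) * ((2 ^ n : ℕ) : ℝ) = 1 by push_cast; field_simp]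
      exact Real.rpow_one _
    rwa [hbn] at hpow
end

section
/- Let k ≥ 3 be an integer, define a : ℕ → ℕ by a(0) = k and a(n+1) = a(n)·(a(n) − 1), and let θ_k = lim_{n→∞} a(n)^{1/2^n}. Then: (i) for every ε > 0 there exists n₀ such that a(n) < (θ_k + ε)^{2^n} for all n ≥ n₀; and (ii) the partial sums A(n) = a(0) + a(1) + ⋯ + a(n) satisfy A(n) = (θ_k + o(1))^{2^n} as n → ∞, i.e. A(n)^{1/2^n} → θ_k. -/
open Filter Real

/-- **Asymptotics of wild generation sizes** (Lemma on wild flies, parts iii–iv):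
if `a 0 = k ≥ 3`, `a (n+1) = a n * (a n - 1)`, and `θ_k` is the limit of
`a(n)^(1/2^n)`, then (i) for every `ε > 0` eventually `a n < (θ_k + ε)^(2^n)`, and
(ii) the partial sums `A n = a 0 + ⋯ + a n` satisfy `A(n)^(1/2^n) → θ_k`. -/
theorem wild_flies_upper_asymptotics (k : ℕ) (hk : 3 ≤ k) (a : ℕ → ℕ)
    (ha0 : a 0 = k) (ha : ∀ n, a (n + 1) = a n * (a n - 1)) (θ : ℝ)
    (hθ : Filter.Tendsto (fun n : ℕ => (a n : ℝ) ^ ((1 : ℝ) / 2 ^ n))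
      Filter.atTop (nhds θ)) :
    (∀ ε > (0 : ℝ), ∃ n₀ : ℕ, ∀ n : ℕ, n₀ ≤ n → (a n : ℝ) < (θ + ε) ^ (2 ^ n)) ∧
    Filter.Tendsto
      (fun n : ℕ => (∑ m ∈ Finset.range (n + 1), (a m : ℝ)) ^ ((1 : ℝ) / 2 ^ n))
      Filter.atTop (nhds θ) := by
  -- basic facts
  have h3 : ∀ n, 3 ≤ a n := by
    intro n
    induction n with
    | zero => simpa [ha0] using hk
    | succ n ih =>
      rw [ha]
      calc (3 : ℕ) ≤ 3 * 2 := by norm_num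
      _ ≤ a n * (a n - 1) := Nat.mul_le_mul ih (by omega)
  have hmono : Monotone a := by
    apply monotone_nat_of_le_succ
    intro n
    rw [ha]
    have := h3 n
    nlinarith [Nat.sub_add_cancel (show 1 ≤ a n by omega)]
  have hpos : ∀ n, (0 : ℝ) < (a n : ℝ) := fun n => by
    exact_mod_cast lt_of_lt_of_le (by norm_num) (h3 n)
  have hexp : ∀ n : ℕ, (0 : ℝ) < (1 : ℝ) / 2 ^ n := fun n => by positivity
  -- key identity: ((a n)^(1/2^n))^(2^n) = a n
  have hid : ∀ n : ℕ, ((a n : ℝ) ^ ((1 : ℝ) / 2 ^ n)) ^ (2 ^ n : ℕ) = (a n : ℝ) := by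
    intro n
    rw [← Real.rpow_natCast ((a n : ℝ) ^ ((1 : ℝ) / 2 ^ n)) (2 ^ n),
      ← Real.rpow_mul (le_of_lt (hpos n))]
    have : (1 : ℝ) / 2 ^ n * ((2 ^ n : ℕ) : ℝ) = 1 := by
      push_cast
      field_simp
    rw [this, Real.rpow_one]
  constructor
  · intro ε hε
    have h1θ : (1 : ℝ) ≤ θ := by
      refine ge_of_tendsto' hθ fun n => ?_
      exact Real.one_le_rpow (by exact_mod_cast le_trans (by norm_num : (1:ℕ) ≤ 3) (h3 n))
        (le_of_lt (hexp n))
    have hev : ∀ᶠ n in atTop, (a n : ℝ) ^ ((1 : ℝ) / 2 ^ n) < θ + ε := by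
      have := hθ.eventually (eventually_lt_nhds (show θ < θ + ε by linarith))
      exact this
    obtain ⟨n₀, hn₀⟩ := hev.exists_forall_of_atTop
    refine ⟨n₀, fun n hn => ?_⟩
    have h := hn₀ n hn
    calc (a n : ℝ) = ((a n : ℝ) ^ ((1 : ℝ) / 2 ^ n)) ^ (2 ^ n : ℕ) := (hid n).symm
    _ < (θ + ε) ^ (2 ^ n) := by
        apply pow_lt_pow_left₀ h (Real.rpow_nonneg (le_of_lt (hpos n)) _)
        positivity
  · -- squeeze
    set A : ℕ → ℝ := fun n => ∑ m ∈ Finset.range (n + 1), (a m : ℝ) with hA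
    have hAlb : ∀ n, (a n : ℝ) ≤ A n := by
      intro n
      apply Finset.single_le_sum (f := fun m => (a m : ℝ))
        (fun i _ => le_of_lt (hpos i)) (Finset.self_mem_range_succ n)
    have hAub : ∀ n, A n ≤ (n + 1 : ℝ) * (a n : ℝ) := by
      intro n
      calc A n ≤ ∑ _m ∈ Finset.range (n + 1), (a n : ℝ) := by
            apply Finset.sum_le_sum
            intro i hi
            exact_mod_cast hmono (Nat.lt_succ_iff.mp (Finset.mem_range.mp hi))
      _ = (n + 1 : ℝ) * (a n : ℝ) := by
            rw [Finset.sum_const, Finset.card_range]; ring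
    have hApos : ∀ n, (0 : ℝ) < A n := fun n => lt_of_lt_of_le (hpos n) (hAlb n)
    -- (n+1)^(1/2^n) → 1
    have hfac : Tendsto (fun n : ℕ => ((n : ℝ) + 1) ^ ((1 : ℝ) / 2 ^ n)) atTop (nhds 1) := by
      have hlog : Tendsto (fun n : ℕ => Real.log ((n : ℝ) + 1) * ((1 : ℝ) / 2 ^ n))
          atTop (nhds 0) := by
        have hup : Tendsto (fun n : ℕ => (n : ℝ) / 2 ^ n) atTop (nhds 0) := by
          simpa using tendsto_pow_const_div_const_pow_of_one_lt 1
            (show (1:ℝ) < 2 by norm_num)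
        apply squeeze_zero (fun n => ?_) (fun n => ?_) hup
        · have : (0:ℝ) ≤ Real.log ((n:ℝ)+1) := Real.log_nonneg (le_add_of_nonneg_left (Nat.cast_nonneg n))
          positivity
        · have hle : Real.log ((n : ℝ) + 1) ≤ (n : ℝ) := by
            have := Real.log_le_sub_one_of_pos (show (0:ℝ) < (n:ℝ)+1 by positivity)
            linarith
          rw [mul_one_div]
          apply div_le_div_of_nonneg_right hle (by positivity) |>.trans_eq rfl
      have := (Real.continuous_exp.tendsto 0).comp hlog
      simp only [Real.exp_zero] at this
      refine this.congr fun n => ?_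
      rw [Function.comp_apply, ← Real.exp_log (show (0:ℝ) < (n:ℝ)+1 by positivity),
        Real.exp_log (by positivity), ← Real.rpow_def_of_pos (by positivity)]
    have hprod : Tendsto (fun n : ℕ => ((n : ℝ) + 1) ^ ((1 : ℝ) / 2 ^ n)
        * (a n : ℝ) ^ ((1 : ℝ) / 2 ^ n)) atTop (nhds θ) := by
      have := hfac.mul hθ
      simpa using this
    refine tendsto_of_tendsto_of_tendsto_of_le_of_le hθ hprod (fun n => ?_) (fun n => ?_)
    · exact Real.rpow_le_rpow (le_of_lt (hpos n)) (hAlb n) (le_of_lt (hexp n))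
    · calc (A n) ^ ((1 : ℝ) / 2 ^ n)
          ≤ (((n : ℝ) + 1) * (a n : ℝ)) ^ ((1 : ℝ) / 2 ^ n) :=
            Real.rpow_le_rpow (le_of_lt (hApos n)) (hAub n) (le_of_lt (hexp n))
      _ = ((n : ℝ) + 1) ^ ((1 : ℝ) / 2 ^ n) * (a n : ℝ) ^ ((1 : ℝ) / 2 ^ n) :=
            Real.mul_rpow (by positivity) (le_of_lt (hpos n))
end

section
/- Let k ≥ 3 be an integer, define a : ℕ → ℕ by a(0) = k and a(n+1) = a(n)·(a(n) − 1), let θ_k = lim_{n→∞} a(n)^{1/2^n}, and for n ≥ 1 set γ(n) = 1 + Σ_{m=0}^{⌊log₂ n⌋} a(m). Then liminf_{n→∞} γ(n)^{1/n} = √θ_k and limsup_{n→∞} γ(n)^{1/n} = θ_k. -/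
open Filter Real Topology

/-- auxiliary: `(2 log₂ n + 3)^(1/n) → 1`. -/
private lemma wild_P_tendsto :
    Tendsto (fun n : ℕ => ((2 * (Nat.log 2 n) + 3 : ℕ) : ℝ) ^ ((1 : ℝ) / n))
      atTop (nhds 1) := by
  have hnn : Tendsto (fun n : ℕ => ((n : ℝ) ^ ((1 : ℝ) / n)) ^ 2) atTop (nhds 1) := by
    have h1 : Tendsto (fun n : ℕ => (n : ℝ) ^ ((1 : ℝ) / n)) atTop (nhds 1) :=
      tendsto_rpow_div.comp tendsto_natCast_atTop_atTop
    simpa using h1.pow 2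
  refine tendsto_of_tendsto_of_tendsto_of_le_of_le' tendsto_const_nhds hnn ?_ ?_
  · filter_upwards [eventually_ge_atTop 1] with n hn
    apply Real.one_le_rpow
    · have : (1:ℕ) ≤ 2 * Nat.log 2 n + 3 := by omega
      exact_mod_cast this
    · positivity
  · filter_upwards [eventually_ge_atTop 4] with n hn
    have hb : ((2 * (Nat.log 2 n) + 3 : ℕ) : ℝ) ≤ (n : ℝ) ^ (2 : ℕ) := by
      have hlog : Nat.log 2 n ≤ n := Nat.log_le_self 2 n
      have : 2 * Nat.log 2 n + 3 ≤ n ^ 2 := by nlinarith [hlog, hn]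
      exact_mod_cast this
    calc ((2 * (Nat.log 2 n) + 3 : ℕ) : ℝ) ^ ((1 : ℝ) / n)
        ≤ ((n : ℝ) ^ (2 : ℕ)) ^ ((1 : ℝ) / n) := by
          apply Real.rpow_le_rpow (by positivity) hb (by positivity)
      _ = ((n : ℝ) ^ ((1 : ℝ) / n)) ^ 2 := by
          rw [← Real.rpow_natCast (n:ℝ) 2, ← Real.rpow_mul (by positivity),
            ← Real.rpow_natCast ((n : ℝ) ^ ((1 : ℝ) / n)) 2,
            ← Real.rpow_mul (by positivity)]
          ring_nf

/-- **Growth of the groupoid of wild flies**: with `a 0 = k ≥ 3`,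
`a (n+1) = a n * (a n - 1)`, `θ_k` the limit of `a(n)^(1/2^n)`, and
`γ(n) = 1 + Σ_{m=0}^{⌊log₂ n⌋} a m`, one has
`liminf γ(n)^(1/n) = √θ_k` and `limsup γ(n)^(1/n) = θ_k`. -/
theorem wild_groupoid_growth (k : ℕ) (hk : 3 ≤ k) (a : ℕ → ℕ)
    (ha0 : a 0 = k) (ha : ∀ n, a (n + 1) = a n * (a n - 1)) (θ : ℝ)
    (hθ : Filter.Tendsto (fun n : ℕ => (a n : ℝ) ^ ((1 : ℝ) / 2 ^ n))
      Filter.atTop (nhds θ))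
    (γ : ℕ → ℕ)
    (hγ : ∀ n : ℕ, 1 ≤ n → γ n = 1 + ∑ m ∈ Finset.range (Nat.log 2 n + 1), a m) :
    Filter.liminf (fun n : ℕ => (γ n : ℝ) ^ ((1 : ℝ) / n)) Filter.atTop
        = Real.sqrt θ ∧
    Filter.limsup (fun n : ℕ => (γ n : ℝ) ^ ((1 : ℝ) / n)) Filter.atTop = θ := by
  -- basic facts about `a`
  have h3 : ∀ n, 3 ≤ a n := by
    intro n
    induction n with
    | zero => simpa [ha0] using hk
    | succ n ih =>
      rw [ha]
      calc 3 ≤ 3 * 2 := by norm_num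
        _ ≤ a n * (a n - 1) := Nat.mul_le_mul ih (by omega)
  have h3R : ∀ n, (3 : ℝ) ≤ (a n : ℝ) := fun n => by exact_mod_cast h3 n
  have hApos : ∀ n, (0 : ℝ) < (a n : ℝ) := fun n => lt_of_lt_of_le (by norm_num) (h3R n)
  have hA : ∀ n, (a (n + 1) : ℝ) = (a n : ℝ) * ((a n : ℝ) - 1) := by
    intro n
    rw [ha, Nat.cast_mul, Nat.cast_sub (by have := h3 n; omega), Nat.cast_one]
  set u : ℕ → ℝ := fun n => (a n : ℝ) ^ ((1 : ℝ) / 2 ^ n) with hu_def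
  set v : ℕ → ℝ := fun n => ((a n : ℝ) / 2) ^ ((1 : ℝ) / 2 ^ n) with hv_def
  -- u is antitone
  have hu_anti : Antitone u := by
    apply antitone_nat_of_succ_le
    intro n
    have hle : (a (n + 1) : ℝ) ≤ ((a n : ℝ)) ^ (2 : ℕ) := by
      rw [hA]; nlinarith [hApos n]
    calc u (n + 1) = (a (n + 1) : ℝ) ^ ((1 : ℝ) / 2 ^ (n + 1)) := rfl
      _ ≤ (((a n : ℝ)) ^ (2 : ℕ)) ^ ((1 : ℝ) / 2 ^ (n + 1)) :=
          Real.rpow_le_rpow (by positivity) hle (by positivity)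
      _ = (a n : ℝ) ^ ((2 : ℝ) * ((1 : ℝ) / 2 ^ (n + 1))) := by
          rw [← Real.rpow_natCast (a n : ℝ) 2, ← Real.rpow_mul (hApos n).le]
          norm_num
      _ = u n := by
          congr 1
          rw [pow_succ]
          field_simp
  have hθ_le_u : ∀ m, θ ≤ u m := by
    intro m
    refine le_of_tendsto hθ ?_
    filter_upwards [eventually_ge_atTop m] with n hn
    exact hu_anti hn
  -- v is monotone and tends to θ
  have hv_mono : Monotone v := by
    apply monotone_nat_of_le_succ
    intro n
    have hle : ((a n : ℝ) / 2) ^ (2 : ℕ) ≤ (a (n + 1) : ℝ) / 2 := by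
      rw [hA]; nlinarith [h3R n]
    calc v n = ((a n : ℝ) / 2) ^ ((1 : ℝ) / 2 ^ n) := rfl
      _ = (((a n : ℝ) / 2) ^ (2 : ℕ)) ^ ((1 : ℝ) / 2 ^ (n + 1)) := by
          rw [← Real.rpow_natCast ((a n : ℝ) / 2) 2, ← Real.rpow_mul (by positivity)]
          congr 1
          rw [pow_succ]
          field_simp
          norm_num
      _ ≤ ((a (n + 1) : ℝ) / 2) ^ ((1 : ℝ) / 2 ^ (n + 1)) :=
          Real.rpow_le_rpow (by positivity) hle (by positivity)
      _ = v (n + 1) := rfl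
  have hv_tendsto : Tendsto v atTop (nhds θ) := by
    have hexp : Tendsto (fun n : ℕ => (1 : ℝ) / 2 ^ n) atTop (nhds 0) := by
      simpa [one_div, Pi.inv_def] using
        (tendsto_pow_atTop_atTop_of_one_lt (by norm_num : (1:ℝ) < 2)).inv_tendsto_atTop
    have h2 : Tendsto (fun n : ℕ => (2 : ℝ) ^ ((1 : ℝ) / 2 ^ n)) atTop (nhds 1) := by
      have := (tendsto_const_nhds (x := (2:ℝ)) (f := atTop (α := ℕ))).rpow hexp
        (Or.inl (by norm_num))
      simpa using this
    have heq : v = fun n => u n / (2 : ℝ) ^ ((1 : ℝ) / 2 ^ n) := by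
      funext n
      simp only [hv_def, hu_def]
      rw [Real.div_rpow (hApos n).le (by norm_num)]
    rw [heq]
    simpa [Pi.div_def] using hθ.div h2 (by norm_num)
  have hv_le_θ : ∀ m, v m ≤ θ := by
    intro m
    refine ge_of_tendsto hv_tendsto ?_
    filter_upwards [eventually_ge_atTop m] with n hn
    exact hv_mono hn
  -- θ ≥ 3/2 > 1
  have hθ_gt1 : (3/2 : ℝ) ≤ θ := by
    have := hv_le_θ 0
    simp only [hv_def, pow_zero, div_one, Real.rpow_one] at this
    have hk' : (3 : ℝ) ≤ (a 0 : ℝ) := h3R 0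
    linarith
  have hθpos : (0 : ℝ) < θ := by linarith
  have hθ1 : (1 : ℝ) ≤ θ := by linarith
  -- two-sided bounds θ^(2^m) ≤ a m ≤ 2 θ^(2^m)
  have hlb : ∀ m, θ ^ ((2 : ℝ) ^ m) ≤ (a m : ℝ) := by
    intro m
    have h := Real.rpow_le_rpow hθpos.le (hθ_le_u m) (by positivity : (0:ℝ) ≤ (2:ℝ) ^ m)
    rw [hu_def, ← Real.rpow_mul (hApos m).le, one_div,
      inv_mul_cancel₀ (by positivity), Real.rpow_one] at h
    exact h
  have hub : ∀ m, (a m : ℝ) ≤ 2 * θ ^ ((2 : ℝ) ^ m) := by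
    intro m
    have h := Real.rpow_le_rpow (by positivity) (hv_le_θ m)
      (by positivity : (0:ℝ) ≤ (2:ℝ) ^ m)
    rw [hv_def, ← Real.rpow_mul (by positivity), one_div,
      inv_mul_cancel₀ (by positivity), Real.rpow_one] at h
    linarith
  -- bounds on γ
  have hγ_ge : ∀ n, 1 ≤ n → (θ ^ ((2:ℝ) ^ (Nat.log 2 n)) : ℝ) ≤ (γ n : ℝ) := by
    intro n hn
    refine (hlb _).trans ?_
    have : a (Nat.log 2 n) ≤ γ n := by
      rw [hγ n hn]
      have := Finset.single_le_sum (f := a) (fun i _ => Nat.zero_le _)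
        (Finset.self_mem_range_succ (Nat.log 2 n))
      omega
    exact_mod_cast this
  have hγ_le : ∀ n, 1 ≤ n →
      (γ n : ℝ) ≤ ((2 * Nat.log 2 n + 3 : ℕ) : ℝ) * θ ^ ((2:ℝ) ^ (Nat.log 2 n)) := by
    intro n hn
    rw [hγ n hn]
    set M := Nat.log 2 n with hM
    have h1 : (1:ℝ) ≤ θ ^ ((2:ℝ) ^ M) := Real.one_le_rpow hθ1 (by positivity)
    have hsum : ∑ m ∈ Finset.range (M+1), (a m : ℝ)
        ≤ ((M : ℝ) + 1) * (2 * θ ^ ((2:ℝ) ^ M)) := by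
      calc ∑ m ∈ Finset.range (M+1), (a m : ℝ)
          ≤ ∑ _m ∈ Finset.range (M+1), 2 * θ ^ ((2:ℝ) ^ M) := by
            apply Finset.sum_le_sum
            intro m hm
            refine (hub m).trans ?_
            have hmM : m ≤ M := Nat.lt_succ_iff.mp (Finset.mem_range.mp hm)
            have : θ ^ ((2:ℝ) ^ m) ≤ θ ^ ((2:ℝ) ^ M) :=
              Real.rpow_le_rpow_of_exponent_le hθ1
                (pow_le_pow_right₀ (by norm_num) hmM)
            linarith
        _ = ((M : ℝ) + 1) * (2 * θ ^ ((2:ℝ) ^ M)) := by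
            rw [Finset.sum_const, Finset.card_range]
            push_cast
            ring
    have hM0 : (0:ℝ) ≤ (M : ℝ) := by positivity
    push_cast
    nlinarith [hsum, h1, hM0]
  -- bounds on f n = γ(n)^(1/n)
  set f : ℕ → ℝ := fun n => (γ n : ℝ) ^ ((1 : ℝ) / n) with hf_def
  have hγpos : ∀ n, 1 ≤ n → (0:ℝ) < (γ n : ℝ) := by
    intro n hn
    calc (0:ℝ) < θ ^ ((2:ℝ) ^ (Nat.log 2 n)) := Real.rpow_pos_of_pos hθpos _
      _ ≤ _ := hγ_ge n hn
  have flow : ∀ n, 1 ≤ n → θ ^ ((2:ℝ) ^ (Nat.log 2 n) / n) ≤ f n := by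
    intro n hn
    have h := Real.rpow_le_rpow (by positivity) (hγ_ge n hn)
      (by positivity : (0:ℝ) ≤ (1:ℝ)/n)
    rwa [← Real.rpow_mul hθpos.le, mul_one_div] at h
  have fup : ∀ n, 1 ≤ n → f n ≤ ((2 * Nat.log 2 n + 3 : ℕ) : ℝ) ^ ((1:ℝ)/n)
      * θ ^ ((2:ℝ) ^ (Nat.log 2 n) / n) := by
    intro n hn
    have h := Real.rpow_le_rpow (by positivity) (hγ_le n hn)
      (by positivity : (0:ℝ) ≤ (1:ℝ)/n)
    rwa [Real.mul_rpow (by positivity) (by positivity),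
      ← Real.rpow_mul hθpos.le, mul_one_div] at h
  -- exponent bounds 1/2 ≤ 2^(log n)/n ≤ 1
  have hexp_ub : ∀ n, 1 ≤ n → (2:ℝ) ^ (Nat.log 2 n) / n ≤ 1 := by
    intro n hn
    rw [div_le_one (by exact_mod_cast hn)]
    exact_mod_cast Nat.pow_log_le_self 2 (by omega)
  have hexp_lb : ∀ n, 1 ≤ n → (1:ℝ)/2 ≤ (2:ℝ) ^ (Nat.log 2 n) / n := by
    intro n hn
    rw [div_le_div_iff₀ (by norm_num) (by exact_mod_cast hn)]
    have h := Nat.lt_pow_succ_log_self (by norm_num : 1 < 2) n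
    have h' : (n : ℝ) ≤ (2:ℝ) ^ (Nat.log 2 n + 1) := by
      exact_mod_cast h.le
    rw [pow_succ] at h'
    linarith
  -- eventual lower bound √θ ≤ f and upper bound f ≤ P * θ
  have E_lb : ∀ n, 1 ≤ n → Real.sqrt θ ≤ f n := by
    intro n hn
    rw [Real.sqrt_eq_rpow]
    calc θ ^ ((1:ℝ)/2) ≤ θ ^ ((2:ℝ) ^ (Nat.log 2 n) / n) :=
          Real.rpow_le_rpow_of_exponent_le hθ1 (hexp_lb n hn)
      _ ≤ f n := flow n hn
  have E_ub : ∀ n, 1 ≤ n →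
      f n ≤ ((2 * Nat.log 2 n + 3 : ℕ) : ℝ) ^ ((1:ℝ)/n) * θ := by
    intro n hn
    refine (fup n hn).trans ?_
    have hθe : θ ^ ((2:ℝ) ^ (Nat.log 2 n) / n) ≤ θ := by
      nth_rewrite 2 [← Real.rpow_one θ]
      exact Real.rpow_le_rpow_of_exponent_le hθ1 (hexp_ub n hn)
    exact mul_le_mul_of_nonneg_left hθe (by positivity)
  have hPθ : Tendsto (fun n : ℕ => ((2 * Nat.log 2 n + 3 : ℕ) : ℝ) ^ ((1:ℝ)/n) * θ)
      atTop (nhds θ) := by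
    simpa using wild_P_tendsto.mul_const θ
  have hf_nonneg : ∀ n, (0:ℝ) ≤ f n := fun n => Real.rpow_nonneg (by positivity) _
  have hbdd_above : IsBoundedUnder (· ≤ ·) atTop f := by
    refine isBoundedUnder_of_eventually_le (a := 2 * θ) ?_
    filter_upwards [hPθ.eventually_le_const (by linarith : θ < 2 * θ),
      eventually_ge_atTop 1] with n h1 h2
    exact (E_ub n h2).trans h1
  have hbdd_below : IsBoundedUnder (· ≥ ·) atTop f :=
    isBoundedUnder_of_eventually_ge (a := 0) (Eventually.of_forall hf_nonneg)
  -- limsup ≤ θ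
  have Hls_le : limsup f atTop ≤ θ := by
    have h := limsup_le_limsup
      (by filter_upwards [eventually_ge_atTop 1] with n hn using E_ub n hn)
      (hbdd_below.isCoboundedUnder_le) (hPθ.isBoundedUnder_le)
    rwa [hPθ.limsup_eq] at h
  -- θ ≤ limsup
  have Hls_ge : θ ≤ limsup f atTop := by
    refine le_limsup_of_frequently_le ?_ hbdd_above
    rw [frequently_atTop]
    intro N
    refine ⟨2 ^ N, (Nat.lt_two_pow_self (n := N)).le, ?_⟩
    have hN1 : 1 ≤ 2 ^ N := Nat.one_le_two_pow
    have hlog : Nat.log 2 (2 ^ N) = N := Nat.log_pow (by norm_num) N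
    have h := flow (2 ^ N) hN1
    rw [hlog] at h
    have hcast : ((2 ^ N : ℕ) : ℝ) = (2:ℝ) ^ N := by push_cast; ring
    rw [hcast, div_self (by positivity), Real.rpow_one] at h
    exact h
  -- √θ ≤ liminf
  have Hli_ge : Real.sqrt θ ≤ liminf f atTop := by
    refine le_liminf_of_le (hbdd_above.isCoboundedUnder_ge) ?_
    filter_upwards [eventually_ge_atTop 1] with n hn using E_lb n hn
  -- liminf ≤ √θ
  have Hli_le : liminf f atTop ≤ Real.sqrt θ := by
    refine le_of_forall_gt_imp_ge_of_dense ?_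
    intro c hc
    -- the subsequence n = 2^(M+1) - 1
    set φ : ℕ → ℕ := fun M => 2 ^ (M + 1) - 1 with hφ_def
    have hφ_ge : ∀ M, M ≤ φ M := by
      intro M
      have hlt : M < 2 ^ M := Nat.lt_two_pow_self
      have h2 : 2 ^ M ≤ 2 ^ (M + 1) := Nat.pow_le_pow_right (by norm_num) (by omega)
      show M ≤ 2 ^ (M + 1) - 1
      omega
    have hφ1 : ∀ M, 1 ≤ φ M := by
      intro M
      have h1 : 1 ≤ 2 ^ M := Nat.one_le_two_pow
      have h2 : 2 ^ (M + 1) = 2 ^ M * 2 := pow_succ 2 M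
      show 1 ≤ 2 ^ (M + 1) - 1
      omega
    have hφlog : ∀ M, Nat.log 2 (φ M) = M := by
      intro M
      refine Nat.log_eq_of_pow_le_of_lt_pow ?_ ?_
      · have h1 : 1 ≤ 2 ^ M := Nat.one_le_two_pow
        have h2 : 2 ^ (M + 1) = 2 ^ M * 2 := pow_succ 2 M
        show 2 ^ M ≤ 2 ^ (M + 1) - 1
        omega
      · have h1 : 1 ≤ 2 ^ (M + 1) := Nat.one_le_two_pow
        show 2 ^ (M + 1) - 1 < 2 ^ (M + 1)
        omega
    set g : ℕ → ℝ := fun M => ((2 * M + 3 : ℕ) : ℝ) ^ ((1:ℝ)/(φ M : ℝ))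
      * θ ^ ((2:ℝ) ^ M / (φ M : ℝ)) with hg_def
    have hfg : ∀ M, f (φ M) ≤ g M := by
      intro M
      have h := fup (φ M) (hφ1 M)
      rwa [hφlog M] at h
    have hg_tendsto : Tendsto g atTop (nhds (Real.sqrt θ)) := by
      have hφ_top : Tendsto φ atTop atTop :=
        tendsto_atTop_mono hφ_ge tendsto_id
      have hP' : Tendsto (fun M => ((2 * M + 3 : ℕ) : ℝ) ^ ((1:ℝ)/(φ M : ℝ)))
          atTop (nhds 1) :=
        (wild_P_tendsto.comp hφ_top).congr (fun M => by
          simp only [Function.comp_apply]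
          rw [hφlog M])
      have hcastφ : ∀ M, ((φ M : ℕ) : ℝ) = 2 * 2 ^ M - 1 := by
        intro M
        have h1 : 1 ≤ 2 ^ (M + 1) := Nat.one_le_two_pow
        simp only [hφ_def]
        push_cast [Nat.cast_sub h1]
        rw [pow_succ]
        ring
      have hexp' : Tendsto (fun M : ℕ => (2:ℝ) ^ M / (φ M : ℝ)) atTop (nhds (1/2)) := by
        have hinv : Tendsto (fun M : ℕ => ((2:ℝ) ^ M)⁻¹) atTop (nhds 0) :=
          (tendsto_pow_atTop_atTop_of_one_lt (by norm_num : (1:ℝ) < 2)).inv_tendsto_atTop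
        have h2 : Tendsto (fun M : ℕ => 2 - ((2:ℝ) ^ M)⁻¹) atTop (nhds 2) := by
          simpa using (tendsto_const_nhds (x := (2:ℝ)) (f := atTop (α := ℕ))).sub hinv
        have h3 := h2.inv₀ (by norm_num)
        rw [show ((2:ℝ))⁻¹ = 1/2 by norm_num] at h3
        refine h3.congr ?_
        intro M
        rw [hcastφ M]
        have hp : (0:ℝ) < (2:ℝ) ^ M := by positivity
        field_simp
      have hθe : Tendsto (fun M : ℕ => θ ^ ((2:ℝ) ^ M / (φ M : ℝ))) atTop
          (nhds (Real.sqrt θ)) := by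
        rw [Real.sqrt_eq_rpow]
        exact (tendsto_const_nhds (x := θ) (f := atTop (α := ℕ))).rpow hexp'
          (Or.inl (by positivity))
      have h := hP'.mul hθe
      rw [one_mul] at h
      exact h
    refine liminf_le_of_frequently_le ?_ hbdd_below
    rw [frequently_atTop]
    intro N
    obtain ⟨M, hgc, hMN⟩ := ((hg_tendsto.eventually_le_const hc).and
      (eventually_ge_atTop N)).exists
    exact ⟨φ M, le_trans hMN (hφ_ge M), (hfg M).trans hgc⟩
  exact ⟨le_antisymm Hli_le Hli_ge, le_antisymm Hls_le Hls_ge⟩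
end

section
/- Call a sequence (a_n) of natural numbers subexponential if for every real r > 1 there exists N such that a_n ≤ r^n for all n ≥ N. For every subexponential sequence (a_n) there exists a sequence c : ℕ → ℕ with c(0) = 3 and 3 ≤ c(n+1) ≤ c(n)·(c(n) − 1) for all n, such that the function γ(n) = 1 + Σ_{m=0}^{⌊log₂ n⌋} c(m) (n ≥ 1) satisfies: (i) liminf_{n→∞} γ(n)/log₂ n = 3; (ii) there exists a strictly increasing sequence of integers (n_j) with γ(n_j) ≥ a_{n_j} for all j; and (iii) γ has subexponential growth, i.e. limsup_{n→∞} γ(n)^{1/n} = 1. -/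
open Filter Finset

namespace HybridFliesAux

/-- the squaring ramp -/
def g : ℕ → ℕ
  | 0 => 3
  | n + 1 => g n * (g n - 1)

lemma g_zero : g 0 = 3 := rfl
lemma g_succ (n : ℕ) : g (n + 1) = g n * (g n - 1) := rfl

lemma three_le_g (n : ℕ) : 3 ≤ g n := by
  induction n with
  | zero => simp [g]
  | succ n ih =>
      show 3 ≤ g n * (g n - 1)
      have h2 : 2 ≤ g n - 1 := by omega
      calc 3 ≤ 3 * 2 := by norm_num
        _ ≤ g n * (g n - 1) := Nat.mul_le_mul ih h2

lemma g_le (n : ℕ) : g n ≤ 3 ^ 2 ^ n := by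
  induction n with
  | zero => simp [g]
  | succ n ih =>
      show g n * (g n - 1) ≤ 3 ^ 2 ^ (n + 1)
      calc g n * (g n - 1) ≤ g n * g n := Nat.mul_le_mul_left _ (Nat.sub_le _ _)
        _ ≤ 3 ^ 2 ^ n * 3 ^ 2 ^ n := Nat.mul_le_mul ih ih
        _ = 3 ^ 2 ^ (n + 1) := by rw [← pow_add]; ring_nf

lemma g_lower (n : ℕ) : 2 * 3 ^ 2 ^ n ≤ 2 ^ 2 ^ n * g n := by
  induction n with
  | zero => simp [g]
  | succ n ih =>
      have hg3 : 3 ≤ g n := three_le_g n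
      set x := g n with hx
      set A := 2 ^ 2 ^ n with hA
      set B := 3 ^ 2 ^ n with hB
      have hA2 : (2 : ℕ) ^ 2 ^ (n + 1) = A * A := by rw [hA, ← pow_add]; ring_nf
      have hB2 : (3 : ℕ) ^ 2 ^ (n + 1) = B * B := by rw [hB, ← pow_add]; ring_nf
      show 2 * 3 ^ 2 ^ (n + 1) ≤ 2 ^ 2 ^ (n + 1) * (x * (x - 1))
      rw [hA2, hB2]
      have hxx : x ≤ 2 * (x - 1) := by omega
      have key : 2 * (2 * (B * B)) ≤ 2 * (A * A * (x * (x - 1))) := by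
        calc 2 * (2 * (B * B)) = (2 * B) * (2 * B) := by ring
          _ ≤ (A * x) * (A * x) := Nat.mul_le_mul ih ih
          _ ≤ (A * x) * (A * (2 * (x - 1))) := by
              apply Nat.mul_le_mul_left
              exact Nat.mul_le_mul_left _ hxx
          _ = 2 * (A * A * (x * (x - 1))) := by ring
      omega

lemma sq_le_two_pow {k : ℕ} (h : 4 ≤ k) : k ^ 2 ≤ 2 ^ k := by
  induction k, h using Nat.le_induction with
  | base => norm_num
  | succ k hk ih =>
      have h1 : (k + 1) ^ 2 ≤ 2 * k ^ 2 := by nlinarith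
      calc (k + 1) ^ 2 ≤ 2 * k ^ 2 := h1
        _ ≤ 2 * 2 ^ k := by omega
        _ = 2 ^ (k + 1) := by ring

lemma exists_L (a : ℕ → ℕ)
    (ha : ∀ r : ℝ, 1 < r → ∃ N : ℕ, ∀ n : ℕ, N ≤ n → (a n : ℝ) ≤ r ^ n)
    (s : ℕ) : ∃ L : ℕ, a (2 ^ (s + L)) ≤ g L := by
  set M : ℕ := 2 ^ s with hM
  have hM1 : 1 ≤ M := Nat.one_le_two_pow
  set x : ℝ := 1 / (4 * M) with hxdef
  have hx0 : 0 < x := by positivity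
  have hx1 : x ≤ 1 / 4 := by
    rw [hxdef, div_le_div_iff₀ (by positivity) (by norm_num)]
    have : (1 : ℝ) ≤ (M : ℝ) := by exact_mod_cast hM1
    nlinarith
  have hr : 1 < 1 + x := by linarith
  obtain ⟨N, hN⟩ := ha (1 + x) hr
  refine ⟨N, ?_⟩
  have hn : N ≤ 2 ^ (s + N) := by
    calc N ≤ 2 ^ N := (Nat.lt_two_pow_self (n := N)).le
      _ ≤ 2 ^ (s + N) := Nat.pow_le_pow_right (by norm_num) (by omega)
  have h1 : (a (2 ^ (s + N)) : ℝ) ≤ (1 + x) ^ 2 ^ (s + N) := hN _ hn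
  have hbern : (1 : ℝ) + (M : ℝ) * (-x) ≤ (1 + (-x)) ^ M := by
    apply one_add_mul_le_pow; linarith
  have hMx : (M : ℝ) * x = 1 / 4 := by
    rw [hxdef]; field_simp
  have h34 : (3 / 4 : ℝ) ≤ (1 - x) ^ M := by
    have he : (1 : ℝ) + (M : ℝ) * (-x) = 1 - (M : ℝ) * x := by ring
    rw [he, hMx] at hbern
    have he2 : (1 : ℝ) + (-x) = 1 - x := by ring
    rw [he2] at hbern
    linarith
  have hprod : ((1 + x) * (1 - x)) ^ M ≤ 1 := by
    have : (1 + x) * (1 - x) = 1 - x ^ 2 := by ring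
    rw [this]
    apply pow_le_one₀ <;> nlinarith
  have hpowpos : (0 : ℝ) < (1 - x) ^ M := by positivity
  have h43 : (1 + x) ^ M ≤ 4 / 3 := by
    rw [mul_pow] at hprod
    rw [← mul_le_mul_iff_of_pos_right hpowpos]
    calc (1 + x) ^ M * (1 - x) ^ M ≤ 1 := hprod
      _ ≤ 4 / 3 * (3 / 4) := by norm_num
      _ ≤ 4 / 3 * (1 - x) ^ M := by nlinarith
  have hsplit : ((1 : ℝ) + x) ^ 2 ^ (s + N) = ((1 + x) ^ M) ^ 2 ^ N := by
    rw [← pow_mul, hM, ← pow_add]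
  have hgN : (4 / 3 : ℝ) ^ 2 ^ N ≤ (g N : ℝ) := by
    have hcast : (2 : ℝ) * 3 ^ 2 ^ N ≤ 2 ^ 2 ^ N * (g N : ℝ) := by exact_mod_cast g_lower N
    have h2pos : (0 : ℝ) < 2 ^ 2 ^ N := by positivity
    have h32 : (2 : ℝ) * (3 / 2) ^ 2 ^ N ≤ (g N : ℝ) := by
      rw [div_pow, ← mul_div_assoc, div_le_iff₀ h2pos]
      linarith [hcast]
    calc ((4 : ℝ) / 3) ^ 2 ^ N ≤ (3 / 2) ^ 2 ^ N := by
          apply pow_le_pow_left₀ (by norm_num) (by norm_num)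
      _ ≤ 2 * (3 / 2) ^ 2 ^ N := by nlinarith [pow_pos (show (0:ℝ) < 3/2 by norm_num) (2 ^ N)]
      _ ≤ (g N : ℝ) := h32
  have : (a (2 ^ (s + N)) : ℝ) ≤ (g N : ℝ) := by
    calc (a (2 ^ (s + N)) : ℝ) ≤ (1 + x) ^ 2 ^ (s + N) := h1
      _ = ((1 + x) ^ M) ^ 2 ^ N := hsplit
      _ ≤ (4 / 3 : ℝ) ^ 2 ^ N := by apply pow_le_pow_left₀ (by positivity) h43
      _ ≤ (g N : ℝ) := hgN
  exact_mod_cast this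

variable (a : ℕ → ℕ) (ha : ∀ r : ℝ, 1 < r → ∃ N : ℕ, ∀ n : ℕ, N ≤ n → (a n : ℝ) ≤ r ^ n)

noncomputable def Lf (s : ℕ) : ℕ := (exists_L a ha s).choose

lemma Lf_spec (s : ℕ) : a (2 ^ (s + Lf a ha s)) ≤ g (Lf a ha s) := (exists_L a ha s).choose_spec

noncomputable def W (s : ℕ) : ℕ := ∑ t ∈ range (Lf a ha s + 1), g t

noncomputable def F : ℕ → ℕ × ℕ
  | 0 => (1, W a ha 1)
  | j + 1 =>
      let p := F j
      let s' := (j + 2) * (p.2 + p.1 + Lf a ha p.1 + 10)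
      (s', p.2 + W a ha s')

noncomputable def ss (j : ℕ) : ℕ := (F a ha j).1
noncomputable def E (j : ℕ) : ℕ := (F a ha j).2
noncomputable def kk (j : ℕ) : ℕ := ss a ha j + Lf a ha (ss a ha j)

lemma ss_zero : ss a ha 0 = 1 := rfl
lemma E_zero : E a ha 0 = W a ha 1 := rfl
lemma ss_succ (j : ℕ) :
    ss a ha (j + 1) = (j + 2) * (E a ha j + ss a ha j + Lf a ha (ss a ha j) + 10) := rfl
lemma E_succ (j : ℕ) : E a ha (j + 1) = E a ha j + W a ha (ss a ha (j + 1)) := rfl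

lemma kk_lt_ss_succ (j : ℕ) : kk a ha j + 2 ≤ ss a ha (j + 1) := by
  rw [ss_succ, kk]
  have h2 : 2 * (E a ha j + ss a ha j + Lf a ha (ss a ha j) + 10)
      ≤ (j + 2) * (E a ha j + ss a ha j + Lf a ha (ss a ha j) + 10) :=
    Nat.mul_le_mul_right _ (by omega)
  omega

lemma ss_lt_ss_succ (j : ℕ) : ss a ha j < ss a ha (j + 1) := by
  have := kk_lt_ss_succ a ha j
  rw [kk] at this; omega

lemma ss_strictMono : StrictMono (ss a ha) := strictMono_nat_of_lt_succ (ss_lt_ss_succ a ha)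

lemma one_le_ss (j : ℕ) : j + 1 ≤ ss a ha j := by
  induction j with
  | zero => simp [ss_zero]
  | succ j ih => have := ss_lt_ss_succ a ha j; omega

lemma burst_unique {i j m : ℕ} (hi : ss a ha i ≤ m ∧ m ≤ kk a ha i)
    (hj : ss a ha j ≤ m ∧ m ≤ kk a ha j) : i = j := by
  by_contra hne
  rcases Nat.lt_or_ge i j with h | h
  · have h1 : kk a ha i + 2 ≤ ss a ha (i + 1) := kk_lt_ss_succ a ha i
    have h2 : ss a ha (i + 1) ≤ ss a ha j := (ss_strictMono a ha).monotone h
    omega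
  · have hlt : j < i := by omega
    have h1 : kk a ha j + 2 ≤ ss a ha (j + 1) := kk_lt_ss_succ a ha j
    have h2 : ss a ha (j + 1) ≤ ss a ha i := (ss_strictMono a ha).monotone hlt
    omega

open Classical in
noncomputable def c (m : ℕ) : ℕ :=
  if h : ∃ j, ss a ha j ≤ m ∧ m ≤ kk a ha j then g (m - ss a ha h.choose) else 3

lemma c_in {j m : ℕ} (hj : ss a ha j ≤ m ∧ m ≤ kk a ha j) :
    c a ha m = g (m - ss a ha j) := by
  have h : ∃ j, ss a ha j ≤ m ∧ m ≤ kk a ha j := ⟨j, hj⟩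
  rw [c, dif_pos h]
  congr 2
  exact congrArg (ss a ha) (burst_unique a ha h.choose_spec hj)

lemma c_out {m : ℕ} (h : ¬ ∃ j, ss a ha j ≤ m ∧ m ≤ kk a ha j) : c a ha m = 3 := by
  rw [c, dif_neg h]

lemma c_zero : c a ha 0 = 3 := by
  apply c_out
  rintro ⟨j, hj1, hj2⟩
  have := one_le_ss a ha j
  omega

lemma three_le_c (m : ℕ) : 3 ≤ c a ha m := by
  by_cases h : ∃ j, ss a ha j ≤ m ∧ m ≤ kk a ha j
  · obtain ⟨j, hj⟩ := h; rw [c_in a ha hj]; exact three_le_g _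
  · rw [c_out a ha h]

lemma c_step (n : ℕ) : 3 ≤ c a ha (n + 1) ∧ c a ha (n + 1) ≤ c a ha n * (c a ha n - 1) := by
  refine ⟨three_le_c a ha _, ?_⟩
  have hbase : 3 ≤ c a ha n := three_le_c a ha n
  have h6 : (6 : ℕ) ≤ c a ha n * (c a ha n - 1) := by
    calc (6 : ℕ) = 3 * 2 := rfl
      _ ≤ c a ha n * (c a ha n - 1) := Nat.mul_le_mul hbase (by omega)
  by_cases h : ∃ j, ss a ha j ≤ n + 1 ∧ n + 1 ≤ kk a ha j
  · obtain ⟨j, hj⟩ := h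
    rcases Nat.eq_or_lt_of_le hj.1 with heq | hlt
    · rw [c_in a ha hj, ← heq, Nat.sub_self, g_zero]
      exact le_trans (by norm_num) h6
    · have hn : ss a ha j ≤ n ∧ n ≤ kk a ha j := by omega
      rw [c_in a ha hj, c_in a ha hn]
      have hsub : n + 1 - ss a ha j = (n - ss a ha j) + 1 := by omega
      rw [hsub, g_succ]
  · rw [c_out a ha h]; omega

/-! ### Sum estimates -/

lemma sum_lower (k : ℕ) : 3 * (k + 1) ≤ ∑ m ∈ range (k + 1), c a ha m := by
  calc 3 * (k + 1) = ∑ _m ∈ range (k + 1), 3 := by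
        rw [Finset.sum_const, card_range]; ring
    _ ≤ ∑ m ∈ range (k + 1), c a ha m := Finset.sum_le_sum fun m _ => three_le_c a ha m

lemma sum_W (j : ℕ) : ∑ i ∈ range (j + 1), W a ha (ss a ha i) = E a ha j := by
  induction j with
  | zero => simp [E_zero, ss_zero]
  | succ j ih => rw [Finset.sum_range_succ, ih, E_succ]

lemma sum_gap {j k : ℕ} (hk : k < ss a ha (j + 1)) :
    ∑ m ∈ range (k + 1), c a ha m ≤ 3 * (k + 1) + E a ha j := by
  classical
  have hsplit : ∑ m ∈ range (k + 1), c a ha m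
      = 3 * (k + 1) + ∑ m ∈ range (k + 1), (c a ha m - 3) := by
    have hc : ∀ m ∈ range (k + 1), c a ha m = 3 + (c a ha m - 3) := by
      intro m _; have := three_le_c a ha m; omega
    rw [Finset.sum_congr rfl hc, Finset.sum_add_distrib, Finset.sum_const, card_range,
      smul_eq_mul]
    ring
  rw [hsplit]
  have hmain : ∑ m ∈ range (k + 1), (c a ha m - 3) ≤ E a ha j := by
    set T : Finset ℕ := (range (j + 1)).biUnion (fun i => Finset.Ico (ss a ha i) (kk a ha i + 1))
      with hT
    have h1 : ∑ m ∈ range (k + 1), (c a ha m - 3)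
        = ∑ m ∈ range (k + 1) ∩ T, (c a ha m - 3) := by
      symm
      apply Finset.sum_subset (Finset.inter_subset_left)
      intro m hm hmn
      have hnotT : m ∉ T := fun hmT => hmn (Finset.mem_inter.mpr ⟨hm, hmT⟩)
      have hmk : m ≤ k := by simpa [Nat.lt_succ_iff] using hm
      have hnob : ¬ ∃ i, ss a ha i ≤ m ∧ m ≤ kk a ha i := by
        rintro ⟨i, hi1, hi2⟩
        apply hnotT
        rw [hT, Finset.mem_biUnion]
        have hij : i ≤ j := by
          by_contra hc
          push_neg at hc
          have : ss a ha (j + 1) ≤ ss a ha i := (ss_strictMono a ha).monotone hc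
          omega
        exact ⟨i, Finset.mem_range.mpr (by omega), Finset.mem_Ico.mpr ⟨hi1, by omega⟩⟩
      rw [c_out a ha hnob]
      omega
    rw [h1]

    have h2 : ∑ m ∈ range (k + 1) ∩ T, (c a ha m - 3) ≤ ∑ m ∈ T, (c a ha m - 3) :=
      Finset.sum_le_sum_of_subset Finset.inter_subset_right
    have h3 : ∑ m ∈ T, (c a ha m - 3)
        = ∑ i ∈ range (j + 1), ∑ m ∈ Finset.Ico (ss a ha i) (kk a ha i + 1), (c a ha m - 3) := by
      rw [hT]
      apply Finset.sum_biUnion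
      intro i hi i' hi' hne
      intro u hu1 hu2 v hv
      exfalso
      have h1 := hu1 hv
      have h2 := hu2 hv
      simp only [Finset.mem_Ico] at h1 h2
      exact hne (burst_unique a ha ⟨h1.1, by omega⟩ ⟨h2.1, by omega⟩)
    have h4 : ∀ i ∈ range (j + 1),
        ∑ m ∈ Finset.Ico (ss a ha i) (kk a ha i + 1), (c a ha m - 3) ≤ W a ha (ss a ha i) := by
      intro i _
      rw [Finset.sum_Ico_eq_sum_range]
      have hcard : kk a ha i + 1 - ss a ha i = Lf a ha (ss a ha i) + 1 := by
        rw [kk]; omega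
      rw [hcard, W]
      apply Finset.sum_le_sum
      intro t ht
      have htL : t ≤ Lf a ha (ss a ha i) := by
        simpa [Nat.lt_succ_iff] using ht
      have hmem : ss a ha i ≤ ss a ha i + t ∧ ss a ha i + t ≤ kk a ha i := by
        constructor
        · omega
        · rw [kk]; omega
      rw [c_in a ha hmem]
      have : ss a ha i + t - ss a ha i = t := by omega
      rw [this]
      omega
    calc ∑ m ∈ range (k + 1) ∩ T, (c a ha m - 3) ≤ ∑ m ∈ T, (c a ha m - 3) := h2
      _ = _ := h3
      _ ≤ ∑ i ∈ range (j + 1), W a ha (ss a ha i) := Finset.sum_le_sum h4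
      _ = E a ha j := sum_W a ha j
  omega


/-! ### Exponential upper bounds -/

lemma c_exp_bound (ρ : ℝ) (hρ : 1 < ρ) (T J : ℕ) (hT : (3 : ℝ) ≤ ρ ^ T)
    (hTs : T ≤ 2 ^ ss a ha J) {m : ℕ} (hm : ss a ha J ≤ m) :
    (c a ha m : ℝ) ≤ ρ ^ 2 ^ m := by
  classical
  have hρ0 : (0 : ℝ) ≤ ρ := by linarith
  have hmono : ∀ {u v : ℕ}, u ≤ v → ρ ^ u ≤ ρ ^ v := fun {u v} huv =>
    pow_le_pow_right₀ hρ.le huv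
  have h2m : T ≤ 2 ^ m :=
    le_trans hTs (Nat.pow_le_pow_right (by norm_num) hm)
  have h3m : (3 : ℝ) ≤ ρ ^ 2 ^ m := le_trans hT (hmono h2m)
  by_cases h : ∃ i, ss a ha i ≤ m ∧ m ≤ kk a ha i
  · obtain ⟨i, hi⟩ := h
    have hJi : J ≤ i := by
      by_contra hcon
      push_neg at hcon
      have h1 : kk a ha i + 2 ≤ ss a ha (i + 1) := kk_lt_ss_succ a ha i
      have h2 : ss a ha (i + 1) ≤ ss a ha J := (ss_strictMono a ha).monotone hcon
      omega
    have hssi : T ≤ 2 ^ ss a ha i :=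
      le_trans hTs (Nat.pow_le_pow_right (by norm_num) ((ss_strictMono a ha).monotone hJi))
    have h3i : (3 : ℝ) ≤ ρ ^ 2 ^ ss a ha i := le_trans hT (hmono hssi)
    rw [c_in a ha hi]
    calc (g (m - ss a ha i) : ℝ) ≤ ((3 : ℕ) ^ 2 ^ (m - ss a ha i) : ℕ) := by
          exact_mod_cast g_le _
      _ = (3 : ℝ) ^ 2 ^ (m - ss a ha i) := by push_cast; ring
      _ ≤ (ρ ^ 2 ^ ss a ha i) ^ 2 ^ (m - ss a ha i) :=
          pow_le_pow_left₀ (by norm_num) h3i _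
      _ = ρ ^ (2 ^ ss a ha i * 2 ^ (m - ss a ha i)) := by rw [← pow_mul]
      _ = ρ ^ 2 ^ m := by rw [← pow_add, Nat.add_sub_cancel' hi.1]
  · rw [c_out a ha h]
    exact_mod_cast h3m

lemma gamma_exp (r : ℝ) (hr : 1 < r) :
    ∃ K : ℕ, ∀ k, K ≤ k →
      ((1 + ∑ m ∈ range (k + 1), c a ha m : ℕ) : ℝ) ≤ r ^ 2 ^ k := by
  set ρ : ℝ := (1 + r) / 2 with hρdef
  have hρ1 : 1 < ρ := by rw [hρdef]; linarith
  have hρr : ρ < r := by rw [hρdef]; linarith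
  have hρ0 : (0 : ℝ) < ρ := by linarith
  obtain ⟨T, hT⟩ := pow_unbounded_of_one_lt (3 : ℝ) hρ1
  set M : ℕ := ss a ha T with hMdef
  have hTM : T ≤ M := by have := one_le_ss a ha T; omega
  have hTs : T ≤ 2 ^ M := by
    calc T ≤ 2 ^ T := (Nat.lt_two_pow_self (n := T)).le
      _ ≤ 2 ^ M := Nat.pow_le_pow_right (by norm_num) hTM
  set C : ℕ := ∑ m ∈ range M, c a ha m with hCdef
  set q : ℝ := r / ρ with hqdef
  have hq1 : 1 < q := (one_lt_div hρ0).mpr hρr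
  obtain ⟨A, hA⟩ := exists_nat_ge ((C + 2 : ℝ) / (q - 1))
  refine ⟨max (max M 4) (A + 1), fun k hk => ?_⟩
  have hkM : M ≤ k := le_trans (le_max_left _ _) (le_trans (le_max_left _ _) hk)
  have hk4 : 4 ≤ k := le_trans (le_max_right _ _) (le_trans (le_max_left _ _) hk)
  have hkA : A + 1 ≤ k := le_trans (le_max_right _ _) hk
  have hpt : ∀ m, M ≤ m → (c a ha m : ℝ) ≤ ρ ^ 2 ^ m := fun m hm =>
    c_exp_bound a ha ρ hρ1 T T hT.le hTs hm
  have hsplit : ∑ m ∈ range (k + 1), c a ha m = C + ∑ m ∈ Finset.Ico M (k + 1), c a ha m := by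
    rw [hCdef]
    exact (Finset.sum_range_add_sum_Ico _ (by omega)).symm
  set X : ℝ := ρ ^ 2 ^ k with hXdef
  have hX1 : 1 ≤ X := one_le_pow₀ hρ1.le
  have hXpos : (0 : ℝ) < X := lt_of_lt_of_le one_pos hX1
  -- sum over the tail
  have htail : ((∑ m ∈ Finset.Ico M (k + 1), c a ha m : ℕ) : ℝ) ≤ (k + 1) * X := by
    push_cast
    calc ∑ m ∈ Finset.Ico M (k + 1), (c a ha m : ℝ)
        ≤ ∑ _m ∈ Finset.Ico M (k + 1), X := by
          apply Finset.sum_le_sum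
          intro m hm
          rw [Finset.mem_Ico] at hm
          calc (c a ha m : ℝ) ≤ ρ ^ 2 ^ m := hpt m hm.1
            _ ≤ X := pow_le_pow_right₀ hρ1.le (Nat.pow_le_pow_right (by norm_num) (by omega))
      _ = ((k + 1 - M : ℕ) : ℝ) * X := by rw [Finset.sum_const, Nat.card_Ico, nsmul_eq_mul]
      _ ≤ (k + 1) * X := by
          apply mul_le_mul_of_nonneg_right _ hXpos.le
          have : (k + 1 - M : ℕ) ≤ k + 1 := by omega
          calc ((k + 1 - M : ℕ) : ℝ) ≤ ((k + 1 : ℕ) : ℝ) := by exact_mod_cast this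
            _ = (k : ℝ) + 1 := by push_cast; ring
  -- the key counting inequality
  have hq0 : (0 : ℝ) < q - 1 := by linarith
  have hA' : (C + 2 : ℝ) ≤ A * (q - 1) := by
    rw [div_le_iff₀ hq0] at hA
    linarith
  have hCk : ((C : ℝ) + k + 2) ≤ q ^ 2 ^ k := by
    have hbern : 1 + (2 ^ k : ℕ) * (q - 1) ≤ q ^ 2 ^ k := by
      have := one_add_mul_le_pow (a := q - 1) (by linarith) (2 ^ k)
      have heq : (1 : ℝ) + (q - 1) = q := by ring
      rwa [heq] at this
    have hk2 : ((k : ℝ)) ^ 2 ≤ ((2 ^ k : ℕ) : ℝ) := by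
      exact_mod_cast sq_le_two_pow hk4
    have hkA' : (A : ℝ) + 1 ≤ (k : ℝ) := by exact_mod_cast hkA
    have hk1 : (1 : ℝ) ≤ (k : ℝ) := by
      have : (1 : ℕ) ≤ k := by omega
      exact_mod_cast this
    have hC0 : (0 : ℝ) ≤ (C : ℝ) := Nat.cast_nonneg _
    have hA0 : (0 : ℝ) ≤ (A : ℝ) := Nat.cast_nonneg _
    have step1 : ((C : ℝ) + 2) * k ≤ (q - 1) * ((k : ℝ) ^ 2) := by
      have hk0 : (0 : ℝ) ≤ (k : ℝ) := Nat.cast_nonneg _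
      have hAk : (A : ℝ) ≤ (k : ℝ) := by linarith
      calc ((C : ℝ) + 2) * k ≤ (A * (q - 1)) * k :=
            mul_le_mul_of_nonneg_right hA' hk0
        _ ≤ ((q - 1) * k) * k := by
            apply mul_le_mul_of_nonneg_right _ hk0
            calc (A : ℝ) * (q - 1) ≤ (k : ℝ) * (q - 1) :=
                  mul_le_mul_of_nonneg_right hAk hq0.le
              _ = (q - 1) * k := by ring
        _ = (q - 1) * k ^ 2 := by ring
    have step2 : (C : ℝ) + k + 1 ≤ ((C : ℝ) + 2) * k := by nlinarith
    have step3 : (q - 1) * ((k : ℝ) ^ 2) ≤ (q - 1) * ((2 ^ k : ℕ) : ℝ) := by nlinarith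
    have : (C : ℝ) + k + 1 ≤ (2 ^ k : ℕ) * (q - 1) := by nlinarith
    linarith
  -- put it together
  have hfinal : ((1 + ∑ m ∈ range (k + 1), c a ha m : ℕ) : ℝ) ≤ ((C : ℝ) + k + 2) * X := by
    rw [hsplit]
    push_cast
    have htail' := htail
    push_cast at htail'
    have hCX : (C : ℝ) ≤ (C : ℝ) * X := le_mul_of_one_le_right (Nat.cast_nonneg _) hX1
    have hrhs : ((C : ℝ) + k + 2) * X = (C : ℝ) * X + ((k : ℝ) + 1) * X + X := by ring
    rw [hrhs]
    linarith
  calc ((1 + ∑ m ∈ range (k + 1), c a ha m : ℕ) : ℝ) ≤ ((C : ℝ) + k + 2) * X := hfinal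
    _ ≤ q ^ 2 ^ k * X := mul_le_mul_of_nonneg_right hCk hXpos.le
    _ = (q * ρ) ^ 2 ^ k := by rw [hXdef, mul_pow]
    _ = r ^ 2 ^ k := by rw [hqdef, div_mul_cancel₀ _ (ne_of_gt hρ0)]


/-! ### liminf-side estimates -/

lemma three_le_flim (n : ℕ) (hn : 2 ≤ n) :
    3 ≤ ((1 + ∑ m ∈ range (Nat.log 2 n + 1), c a ha m : ℕ) : ℝ) / Real.logb 2 n := by
  set k := Nat.log 2 n with hk
  have hn1 : (1 : ℝ) < (n : ℝ) := by exact_mod_cast lt_of_lt_of_le one_lt_two hn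
  have hpos : 0 < Real.logb 2 n := Real.logb_pos one_lt_two hn1
  have hlt : Real.logb 2 (n : ℝ) < (k : ℝ) + 1 := by
    have h2 : (n : ℝ) < (2 : ℝ) ^ (k + 1) := by
      exact_mod_cast Nat.lt_pow_succ_log_self (by norm_num) n
    calc Real.logb 2 n < Real.logb 2 ((2 : ℝ) ^ (k + 1)) :=
          Real.logb_lt_logb one_lt_two (by positivity) h2
      _ = ((k + 1 : ℕ) : ℝ) * Real.logb 2 2 := by rw [Real.logb_pow]
      _ = (k : ℝ) + 1 := by rw [Real.logb_self_eq_one one_lt_two]; push_cast; ring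
  have hnumn : 3 * (k + 1) + 1 ≤ 1 + ∑ m ∈ range (k + 1), c a ha m := by
    have := sum_lower a ha k
    omega
  have hnum : 3 * ((k : ℝ) + 1) + 1 ≤ ((1 + ∑ m ∈ range (k + 1), c a ha m : ℕ) : ℝ) := by
    calc 3 * ((k : ℝ) + 1) + 1 = ((3 * (k + 1) + 1 : ℕ) : ℝ) := by push_cast; ring
      _ ≤ _ := by exact_mod_cast hnumn
  rw [le_div_iff₀ hpos]
  nlinarith [hpos, hlt, hnum]

lemma freq_upper (ε : ℝ) (hε : 0 < ε) (N : ℕ) :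
    ∃ n, N ≤ n ∧
      ((1 + ∑ m ∈ range (Nat.log 2 n + 1), c a ha m : ℕ) : ℝ) / Real.logb 2 n ≤ 3 + ε := by
  obtain ⟨j₀, hj₀⟩ := exists_nat_gt (1 / ε)
  set j := max N j₀ with hj
  set K := ss a ha (j + 1) with hK
  have hK2 : j + 2 ≤ K := one_le_ss a ha (j + 1)
  set n := 2 ^ K - 1 with hn
  have h2K1 : 1 ≤ 2 ^ (K - 1) := Nat.one_le_two_pow
  have hKpow : 2 ^ (K - 1) * 2 = 2 ^ K := by
    have hKK : K - 1 + 1 = K := by omega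
    rw [← pow_succ, hKK]
  have hlogn : Nat.log 2 n = K - 1 := by
    apply Nat.log_eq_of_pow_le_of_lt_pow
    · omega
    · rw [show K - 1 + 1 = K by omega]; omega
  have hKlt : K < 2 ^ K := Nat.lt_two_pow_self (n := K)
  have hjN : N ≤ j := le_max_left _ _
  have hnN : N ≤ n := by omega
  refine ⟨n, hnN, ?_⟩
  have hgap : ∑ m ∈ range ((K - 1) + 1), c a ha m ≤ 3 * ((K - 1) + 1) + E a ha j :=
    sum_gap a ha (by omega)
  have h4K : (4 : ℕ) ≤ 2 ^ K := by
    calc (4 : ℕ) = 2 ^ 2 := rfl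
      _ ≤ 2 ^ K := Nat.pow_le_pow_right (by norm_num) (by omega)
  have hn2 : 2 ≤ n := by omega
  have hnreal : ((2 : ℝ)) ^ (K - 1) ≤ (n : ℝ) := by
    exact_mod_cast (show 2 ^ (K - 1) ≤ n by omega)
  have hcastK : ((K - 1 : ℕ) : ℝ) = (K : ℝ) - 1 := by
    have : 1 ≤ K := by omega
    push_cast [this]
    ring
  have hlb : ((K : ℝ) - 1) ≤ Real.logb 2 n := by
    have h := Real.logb_le_logb_of_le one_lt_two (by positivity) hnreal
    rw [show ((2:ℝ) ^ (K-1)) = ((2:ℝ) ^ ((K-1 : ℕ)))  from rfl, Real.logb_pow,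
      Real.logb_self_eq_one one_lt_two] at h
    rw [hcastK] at h
    linarith
  have hKpos : (0 : ℝ) < (K : ℝ) - 1 := by
    have h2 : (2 : ℝ) ≤ (K : ℝ) := by exact_mod_cast (show 2 ≤ K by omega)
    linarith
  have hpos : 0 < Real.logb 2 n := lt_of_lt_of_le hKpos hlb
  have hkey : (j + 1) * (E a ha j + 4) ≤ K - 1 := by
    have hs := ss_succ a ha j
    have hexp : (j + 2) * (E a ha j + 10) ≤ K := by
      rw [hK, hs]
      exact Nat.mul_le_mul_left _ (by omega)
    have hring : (j + 2) * (E a ha j + 10)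
        = (j + 1) * (E a ha j + 4) + (E a ha j + 6 * j + 16) := by ring
    omega
  have hnum : ((1 + ∑ m ∈ range (Nat.log 2 n + 1), c a ha m : ℕ) : ℝ)
      ≤ 3 * ((K : ℝ) - 1) + ((E a ha j : ℝ) + 4) := by
    rw [hlogn]
    have hnn : (1 + ∑ m ∈ range ((K - 1) + 1), c a ha m : ℕ)
        ≤ 3 * (K - 1) + E a ha j + 4 := by omega
    calc ((1 + ∑ m ∈ range ((K - 1) + 1), c a ha m : ℕ) : ℝ)
        ≤ ((3 * (K - 1) + E a ha j + 4 : ℕ) : ℝ) := by exact_mod_cast hnn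
      _ = 3 * ((K : ℝ) - 1) + ((E a ha j : ℝ) + 4) := by
          push_cast [hcastK]
          ring
  have hfrac : ((E a ha j : ℝ) + 4) ≤ ε * ((K : ℝ) - 1) := by
    have h1 : ((j : ℝ) + 1) * ((E a ha j : ℝ) + 4) ≤ (K : ℝ) - 1 := by
      rw [← hcastK]
      exact_mod_cast hkey
    have hjj : (j₀ : ℝ) ≤ (j : ℝ) + 1 := by
      have : j₀ ≤ j + 1 := le_trans (le_max_right N j₀) (by omega)
      exact_mod_cast this
    have hεj : 1 ≤ ε * ((j : ℝ) + 1) := by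
      have hlt : 1 / ε < (j : ℝ) + 1 := lt_of_lt_of_le hj₀ hjj
      rw [div_lt_iff₀ hε] at hlt
      nlinarith
    have hE0 : (0 : ℝ) ≤ (E a ha j : ℝ) + 4 := by positivity
    calc (E a ha j : ℝ) + 4 = 1 * ((E a ha j : ℝ) + 4) := by ring
      _ ≤ (ε * ((j : ℝ) + 1)) * ((E a ha j : ℝ) + 4) :=
          mul_le_mul_of_nonneg_right hεj hE0
      _ = ε * (((j : ℝ) + 1) * ((E a ha j : ℝ) + 4)) := by ring
      _ ≤ ε * ((K : ℝ) - 1) := mul_le_mul_of_nonneg_left h1 hε.le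
  rw [div_le_iff₀ hpos]
  calc ((1 + ∑ m ∈ range (Nat.log 2 n + 1), c a ha m : ℕ) : ℝ)
      ≤ 3 * ((K : ℝ) - 1) + ((E a ha j : ℝ) + 4) := hnum
    _ ≤ 3 * ((K : ℝ) - 1) + ε * ((K : ℝ) - 1) := by linarith
    _ = (3 + ε) * ((K : ℝ) - 1) := by ring
    _ ≤ (3 + ε) * Real.logb 2 n := by
        apply mul_le_mul_of_nonneg_left hlb
        linarith

lemma gamma_exp_n (r : ℝ) (hr : 1 < r) :
    ∀ᶠ n : ℕ in atTop,
      ((1 + ∑ m ∈ range (Nat.log 2 n + 1), c a ha m : ℕ) : ℝ) ≤ r ^ n := by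
  obtain ⟨K, hK⟩ := gamma_exp a ha r hr
  rw [eventually_atTop]
  refine ⟨2 ^ K, fun n hn => ?_⟩
  have hn1 : 1 ≤ n := le_trans Nat.one_le_two_pow hn
  have hkK : K ≤ Nat.log 2 n :=
    (Nat.le_log_iff_pow_le (by norm_num) (by omega)).mpr hn
  have h1 := hK _ hkK
  have h2 : 2 ^ Nat.log 2 n ≤ n := Nat.pow_log_le_self 2 (by omega)
  calc ((1 + ∑ m ∈ range (Nat.log 2 n + 1), c a ha m : ℕ) : ℝ) ≤ r ^ 2 ^ Nat.log 2 n := h1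
    _ ≤ r ^ n := pow_le_pow_right₀ hr.le h2

lemma tendsto_root :
    Tendsto (fun n : ℕ =>
        ((1 + ∑ m ∈ range (Nat.log 2 n + 1), c a ha m : ℕ) : ℝ) ^ ((1 : ℝ) / n))
      atTop (nhds 1) := by
  rw [tendsto_order]
  constructor
  · intro b hb
    filter_upwards [eventually_ge_atTop 1] with n hn
    have h1 : (1 : ℝ) ≤ ((1 + ∑ m ∈ range (Nat.log 2 n + 1), c a ha m : ℕ) : ℝ) := by
      exact_mod_cast Nat.le_add_right 1 _
    have h2 : (0 : ℝ) ≤ (1 : ℝ) / n := by positivity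
    calc b < 1 := hb
      _ ≤ _ := Real.one_le_rpow h1 h2
  · intro b hb
    set r : ℝ := (1 + b) / 2 with hrdef
    have hr1 : 1 < r := by rw [hrdef]; linarith
    have hrb : r < b := by rw [hrdef]; linarith
    filter_upwards [gamma_exp_n a ha r hr1, eventually_ge_atTop 1] with n hle hn
    have hn0 : (n : ℝ) ≠ 0 := by
      have : (1 : ℝ) ≤ (n : ℝ) := by exact_mod_cast hn
      linarith
    have hγ0 : (0 : ℝ) ≤ ((1 + ∑ m ∈ range (Nat.log 2 n + 1), c a ha m : ℕ) : ℝ) :=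
      Nat.cast_nonneg _
    have h2 : (0 : ℝ) ≤ (1 : ℝ) / n := by positivity
    have hrpow : ((1 + ∑ m ∈ range (Nat.log 2 n + 1), c a ha m : ℕ) : ℝ) ^ ((1 : ℝ) / n)
        ≤ (r ^ n) ^ ((1 : ℝ) / n) := Real.rpow_le_rpow hγ0 hle h2
    have hid : (r ^ n : ℝ) ^ ((1 : ℝ) / n) = r := by
      rw [← Real.rpow_natCast r n, ← Real.rpow_mul (by linarith : (0:ℝ) ≤ r)]
      rw [mul_one_div, div_self hn0, Real.rpow_one]
    calc ((1 + ∑ m ∈ range (Nat.log 2 n + 1), c a ha m : ℕ) : ℝ) ^ ((1 : ℝ) / n)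
        ≤ (r ^ n) ^ ((1 : ℝ) / n) := hrpow
      _ = r := hid
      _ < b := hrb

end HybridFliesAux

open HybridFliesAux Filter Finset

/-- **Hybrid species of flies with oscillating groupoid growth**: for every
subexponential sequence `a`, there are generation sizes `c` with `c 0 = 3` and
`3 ≤ c (n+1) ≤ c n * (c n - 1)` such that the groupoid growth function
`γ(n) = 1 + Σ_{m=0}^{⌊log₂ n⌋} c m` satisfies: (i) `liminf γ(n)/log₂ n = 3`;
(ii) `γ(n_j) ≥ a(n_j)` along a strictly increasing sequence `(n_j)`; and
(iii) `γ` has subexponential growth, i.e. `limsup γ(n)^(1/n) = 1`. -/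
theorem hybrid_flies_oscillating_growth (a : ℕ → ℕ)
    (ha : ∀ r : ℝ, 1 < r → ∃ N : ℕ, ∀ n : ℕ, N ≤ n → (a n : ℝ) ≤ r ^ n) :
    ∃ c : ℕ → ℕ, c 0 = 3 ∧
      (∀ n : ℕ, 3 ≤ c (n + 1) ∧ c (n + 1) ≤ c n * (c n - 1)) ∧
      Filter.liminf
        (fun n : ℕ =>
          ((1 + ∑ m ∈ Finset.range (Nat.log 2 n + 1), c m : ℕ) : ℝ) / Real.logb 2 n)
        Filter.atTop = 3 ∧
      (∃ nj : ℕ → ℕ, StrictMono nj ∧ ∀ j : ℕ,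
        a (nj j) ≤ 1 + ∑ m ∈ Finset.range (Nat.log 2 (nj j) + 1), c m) ∧
      Filter.limsup
        (fun n : ℕ =>
          ((1 + ∑ m ∈ Finset.range (Nat.log 2 n + 1), c m : ℕ) : ℝ) ^ ((1 : ℝ) / n))
        Filter.atTop = 1 := by
  refine ⟨c a ha, c_zero a ha, c_step a ha, ?_, ?_, ?_⟩
  · -- liminf = 3
    set f : ℕ → ℝ := fun n =>
      ((1 + ∑ m ∈ Finset.range (Nat.log 2 n + 1), c a ha m : ℕ) : ℝ) / Real.logb 2 n with hf
    have hev : ∀ᶠ n in atTop, 3 ≤ f n := by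
      filter_upwards [eventually_ge_atTop 2] with n hn
      exact three_le_flim a ha n hn
    have hfreq : ∀ ε : ℝ, 0 < ε → ∃ᶠ n in atTop, f n ≤ 3 + ε := by
      intro ε hε
      rw [frequently_atTop]
      intro N
      obtain ⟨n, hn1, hn2⟩ := freq_upper a ha ε hε N
      exact ⟨n, hn1, hn2⟩
    have hbdd : IsBoundedUnder (· ≥ ·) atTop f := ⟨3, by
      rw [eventually_map]; exact hev⟩
    have h4 : ∃ᶠ n in atTop, f n ≤ 4 := (hfreq 1 one_pos).mono fun n hn => by linarith
    have hcob : IsCoboundedUnder (· ≥ ·) atTop f :=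
      IsCoboundedUnder.of_frequently_le h4
    apply le_antisymm
    · by_contra hcon
      push_neg at hcon
      set L := liminf f atTop with hL
      have hε : 0 < (L - 3) / 2 := by linarith
      have := liminf_le_of_frequently_le (hfreq _ hε) hbdd
      rw [← hL] at this
      linarith
    · exact le_liminf_of_le hcob hev
  · -- subsequence
    refine ⟨fun j => 2 ^ kk a ha j, ?_, ?_⟩
    · have hkk : StrictMono (kk a ha) := by
        apply strictMono_nat_of_lt_succ
        intro j
        have h1 := kk_lt_ss_succ a ha j
        have h2 : kk a ha (j + 1) = ss a ha (j + 1) + Lf a ha (ss a ha (j + 1)) := rfl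
        omega
      intro i j hij
      exact Nat.pow_lt_pow_right (by norm_num) (hkk hij)
    · intro j
      show a (2 ^ kk a ha j) ≤ 1 + ∑ m ∈ Finset.range (Nat.log 2 (2 ^ kk a ha j) + 1), c a ha m
      rw [Nat.log_pow (by norm_num)]
      have h1 : a (2 ^ kk a ha j) ≤ g (Lf a ha (ss a ha j)) := Lf_spec a ha (ss a ha j)
      have hmem : ss a ha j ≤ kk a ha j ∧ kk a ha j ≤ kk a ha j := by
        constructor
        · have h2 : kk a ha j = ss a ha j + Lf a ha (ss a ha j) := rfl
          omega
        · exact le_rfl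
      have h2 : c a ha (kk a ha j) = g (Lf a ha (ss a ha j)) := by
        rw [c_in a ha hmem, kk, Nat.add_sub_cancel_left]
      have h3 : c a ha (kk a ha j) ≤ ∑ m ∈ Finset.range (kk a ha j + 1), c a ha m :=
        Finset.single_le_sum (fun i _ => Nat.zero_le _) (self_mem_range_succ _)
      omega
  · -- limsup = 1
    exact (tendsto_root a ha).limsup_eq
end

section
/- Let p be a prime and k ≥ 3 an integer, set μ = log_{2p−1} 2, define a : ℕ → ℕ by a(0) = k, a(n+1) = a(n)·(a(n) − 1), and let θ_k = lim_{n→∞} a(n)^{1/2^n}. Let c : ℕ → ℕ satisfy c(0) = k and c(n+1) ≤ c(n)·(c(n) − 1) for all n, and let w : ℕ → ℝ satisfy w(0) = 1 and w(n+1) = (p^{S_n} + p^{R_n} − 1)·w(n) for some positive integers S_n, R_n. Then for every θ* > θ_k there exists M such that c(n) < (θ*)^{w(n)^{μ}} for all n ≥ M. -/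
/-- **Generation sizes versus weights** (upper bound for an arbitrary specie with a
uniform tuple): let `p` be a prime, `k ≥ 3`, `a` the wild generation sizes with
limit `θ_k` of `a(n)^(1/2^n)`, `c` the generation sizes of an arbitrary specie
(`c 0 = k`, `c (n+1) ≤ c n * (c n - 1)`), and `w` the weights of the pivot elements
(`w 0 = 1`, `w (n+1) = (p^{S_n} + p^{R_n} - 1) w n` for positive integers `S_n, R_n`).
Then for every `θ* > θ_k` one has `c n < (θ*)^(w(n)^μ)` for all large `n`, where
`μ = log_{2p-1} 2`. -/
theorem species_size_vs_weight (p k : ℕ) (hp : p.Prime) (hk : 3 ≤ k)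
    (a : ℕ → ℕ) (ha0 : a 0 = k) (ha : ∀ n, a (n + 1) = a n * (a n - 1))
    (θ : ℝ)
    (hθ : Filter.Tendsto (fun n : ℕ => (a n : ℝ) ^ ((1 : ℝ) / 2 ^ n))
      Filter.atTop (nhds θ))
    (c : ℕ → ℕ) (hc0 : c 0 = k) (hc : ∀ n, c (n + 1) ≤ c n * (c n - 1))
    (S R : ℕ → ℕ) (hS : ∀ n, 0 < S n) (hR : ∀ n, 0 < R n)
    (w : ℕ → ℝ) (hw0 : w 0 = 1)
    (hw : ∀ n, w (n + 1) = ((p : ℝ) ^ S n + (p : ℝ) ^ R n - 1) * w n)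
    (θs : ℝ) (hθs : θ < θs) :
    ∃ M : ℕ, ∀ n : ℕ, M ≤ n →
      (c n : ℝ) < θs ^ (w n ^ Real.logb (2 * (p : ℝ) - 1) 2) := by
  have hp2 : 2 ≤ p := hp.two_le
  have hpR : (2 : ℝ) ≤ (p : ℝ) := by exact_mod_cast hp2
  set b : ℝ := 2 * (p : ℝ) - 1 with hbdef
  have hb3 : (3 : ℝ) ≤ b := by simp only [hbdef]; linarith
  have hb0 : (0 : ℝ) < b := by linarith
  have hb1 : (1 : ℝ) < b := by linarith
  set μ : ℝ := Real.logb b 2 with hμdef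
  have hμpos : 0 < μ := Real.logb_pos hb1 one_lt_two
  have hbμ : b ^ μ = 2 := Real.rpow_logb hb0 (by linarith) two_pos
  -- lower bound for w
  have hwlb : ∀ n, b ^ n ≤ w n := by
    intro n
    induction n with
    | zero => simp [hw0]
    | succ n ih =>
      have hwn : 0 < w n := lt_of_lt_of_le (pow_pos hb0 n) ih
      have h1 : (p : ℝ) ≤ (p : ℝ) ^ S n :=
        le_self_pow₀ (by linarith) (hS n).ne'
      have h2 : (p : ℝ) ≤ (p : ℝ) ^ R n :=
        le_self_pow₀ (by linarith) (hR n).ne'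
      have hfac : b ≤ (p : ℝ) ^ S n + (p : ℝ) ^ R n - 1 := by
        simp only [hbdef]; linarith
      rw [hw n, pow_succ]
      calc b ^ n * b ≤ w n * ((p : ℝ) ^ S n + (p : ℝ) ^ R n - 1) := by
            apply mul_le_mul ih hfac hb0.le hwn.le
        _ = ((p : ℝ) ^ S n + (p : ℝ) ^ R n - 1) * w n := by ring
  have hwpos : ∀ n, 0 < w n := fun n => lt_of_lt_of_le (pow_pos hb0 n) (hwlb n)
  -- c ≤ a
  have hca : ∀ n, c n ≤ a n := by
    intro n
    induction n with
    | zero => rw [hc0, ha0]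
    | succ n ih =>
      calc c (n + 1) ≤ c n * (c n - 1) := hc n
        _ ≤ a n * (a n - 1) := Nat.mul_le_mul ih (Nat.sub_le_sub_right ih 1)
        _ = a (n + 1) := (ha n).symm
  -- lower bound for a
  have halb : ∀ n, 2 ^ 2 ^ n + 1 ≤ a n := by
    intro n
    induction n with
    | zero => simpa [ha0] using hk
    | succ n ih =>
      have ht : (2 : ℕ) ≤ 2 ^ 2 ^ n := by
        calc (2 : ℕ) = 2 ^ 1 := (pow_one 2).symm
          _ ≤ 2 ^ 2 ^ n := Nat.pow_le_pow_right (by norm_num) (Nat.one_le_two_pow)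
      have hx1 : 2 ^ 2 ^ n ≤ a n - 1 := by omega
      have key : (2 ^ 2 ^ n + 1) * 2 ^ 2 ^ n ≤ a n * (a n - 1) :=
        Nat.mul_le_mul (by omega) hx1
      have hsq : 2 ^ 2 ^ (n + 1) = 2 ^ 2 ^ n * 2 ^ 2 ^ n := by
        rw [← pow_add]
        congr 1
        omega
      rw [ha n, hsq]
      calc 2 ^ 2 ^ n * 2 ^ 2 ^ n + 1 ≤ (2 ^ 2 ^ n + 1) * 2 ^ 2 ^ n := by nlinarith
        _ ≤ a n * (a n - 1) := key
  -- θ ≥ 2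
  have hθ2 : (2 : ℝ) ≤ θ := by
    apply ge_of_tendsto' hθ
    intro n
    have hcast : ((2 ^ 2 ^ n : ℕ) : ℝ) = (2 : ℝ) ^ (2 ^ n : ℕ) := by push_cast; ring
    have han : (2 : ℝ) ^ (2 ^ n : ℕ) ≤ (a n : ℝ) := by
      rw [← hcast]
      exact_mod_cast le_trans (Nat.le_add_right _ 1) (halb n)
    have h2n : ((2 : ℝ) ^ (2 ^ n : ℕ)) ^ ((1 : ℝ) / 2 ^ n) = 2 := by
      rw [← Real.rpow_natCast (2 : ℝ) (2 ^ n), ← Real.rpow_mul (by norm_num)]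
      have : ((2 ^ n : ℕ) : ℝ) * ((1 : ℝ) / 2 ^ n) = 1 := by
        push_cast
        field_simp
      rw [this, Real.rpow_one]
    calc (2 : ℝ) = ((2 : ℝ) ^ (2 ^ n : ℕ)) ^ ((1 : ℝ) / 2 ^ n) := h2n.symm
      _ ≤ (a n : ℝ) ^ ((1 : ℝ) / 2 ^ n) :=
          Real.rpow_le_rpow (by positivity) han (by positivity)
  have hθs1 : (1 : ℝ) < θs := by linarith
  -- eventually a n ^ (1/2^n) < θs
  have hev : ∀ᶠ n in Filter.atTop, (a n : ℝ) ^ ((1 : ℝ) / 2 ^ n) < θs :=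
    hθ.eventually_lt_const hθs
  obtain ⟨M, hM⟩ := Filter.eventually_atTop.mp hev
  refine ⟨M, fun n hn => ?_⟩
  have hMn := hM n hn
  -- a n < θs ^ 2^n
  have hapos : (0 : ℝ) < (a n : ℝ) := by
    have h0 : 0 < a n := lt_of_lt_of_le (Nat.succ_pos _) (halb n)
    exact_mod_cast h0
  have h1 : (a n : ℝ) < θs ^ ((2 : ℝ) ^ n) := by
    have h := Real.rpow_lt_rpow (Real.rpow_nonneg hapos.le _) hMn
      (show (0 : ℝ) < (2 : ℝ) ^ n by positivity)
    have hone : (1 : ℝ) / 2 ^ n * 2 ^ n = 1 := one_div_mul_cancel (by positivity)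
    rwa [← Real.rpow_mul hapos.le, hone, Real.rpow_one] at h
  have h2 : (2 : ℝ) ^ n ≤ w n ^ μ := by
    have hbn : (b ^ (n : ℕ) : ℝ) ^ μ = (2 : ℝ) ^ n := by
      rw [← Real.rpow_natCast b n, ← Real.rpow_mul hb0.le, mul_comm,
        Real.rpow_mul hb0.le, hbμ, Real.rpow_natCast]
    calc (2 : ℝ) ^ n = (b ^ (n : ℕ) : ℝ) ^ μ := hbn.symm
      _ ≤ w n ^ μ := Real.rpow_le_rpow (pow_nonneg hb0.le n) (hwlb n) hμpos.le
  have h3 : θs ^ ((2 : ℝ) ^ n) ≤ θs ^ (w n ^ μ) :=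
    (Real.rpow_le_rpow_left_iff hθs1).mpr h2
  calc (c n : ℝ) ≤ (a n : ℝ) := by exact_mod_cast hca n
    _ < θs ^ ((2 : ℝ) ^ n) := h1
    _ ≤ θs ^ (w n ^ μ) := h3
end

section
/- Let n ≥ 1 and let Γ be the set of permutations π of {1, 2, …, 2^n} such that for every l with 0 ≤ l ≤ n−1 and every k with 0 ≤ k ≤ 2^{n−1−l} − 1 one has π(1 + 2k·2^l) < π(1 + (2k+1)·2^l). Then the cardinality of Γ equals (2^n)! / 2^{2^n − 1}, the index of a Sylow 2-subgroup of the symmetric group Sym(2^n). -/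
namespace SylowCC


/-- Conditionally rotate `x` by `L` within its block of size `2*L`. -/
def swapAt (L : ℕ) (b : ℕ → Bool) (x : ℕ) : ℕ :=
  if b (x / (2 * L)) then 2 * L * (x / (2 * L)) + (x % (2 * L) + L) % (2 * L) else x

lemma swapAt_div {L : ℕ} (hL : 0 < L) (b : ℕ → Bool) (x : ℕ) :
    swapAt L b x / (2 * L) = x / (2 * L) := by
  unfold swapAt
  split
  · rw [Nat.mul_add_div (by omega), Nat.div_eq_of_lt (Nat.mod_lt _ (by omega)), add_zero]
  · rfl

lemma swapAt_invol {L : ℕ} (hL : 0 < L) (b : ℕ → Bool) (x : ℕ) :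
    swapAt L b (swapAt L b x) = x := by
  by_cases h : b (x / (2 * L)) = true
  · have hq : (2*L*(x/(2*L)) + (x % (2*L) + L) % (2*L)) / (2*L) = x / (2*L) := by
      rw [Nat.mul_add_div (by omega), Nat.div_eq_of_lt (Nat.mod_lt _ (by omega)), add_zero]
    have hr : (2*L*(x/(2*L)) + (x % (2*L) + L) % (2*L)) % (2*L) = (x % (2*L) + L) % (2*L) := by
      rw [Nat.mul_add_mod, Nat.mod_mod_of_dvd _ dvd_rfl]
    unfold swapAt
    rw [if_pos h, hq, if_pos h, hr, Nat.mod_add_mod, add_assoc,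
      show L + L = 2 * L by ring, Nat.add_mod_right, Nat.mod_mod_of_dvd _ dvd_rfl,
      Nat.div_add_mod]
  · unfold swapAt
    rw [if_neg h, if_neg h]

lemma swapAt_lt {L N : ℕ} (hL : 0 < L) (hdvd : 2 * L ∣ N) (b : ℕ → Bool) {x : ℕ}
    (hx : x < N) : swapAt L b x < N := by
  unfold swapAt
  split
  · obtain ⟨M, rfl⟩ := hdvd
    have hq : x / (2 * L) < M := by
      rw [Nat.div_lt_iff_lt_mul (by omega), mul_comm]; exact hx
    have hr : (x % (2 * L) + L) % (2 * L) < 2 * L := Nat.mod_lt _ (by omega)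
    calc 2 * L * (x / (2 * L)) + (x % (2 * L) + L) % (2 * L)
        < 2 * L * (x / (2 * L)) + 2 * L := by omega
      _ = 2 * L * (x / (2 * L) + 1) := by ring
      _ ≤ 2 * L * M := Nat.mul_le_mul_left _ hq
  · exact hx

/-- If `2*e` divides `N` and `s`, and `s < N`, then `s + e < N`. -/
lemma add_lt_of_dvd {e N s : ℕ} (he : 0 < e) (hN : 2 * e ∣ N) (hs : 2 * e ∣ s)
    (hlt : s < N) : s + e < N := by
  obtain ⟨M, rfl⟩ := hN
  obtain ⟨w, rfl⟩ := hs
  have hw : w < M := Nat.lt_of_mul_lt_mul_left hlt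
  calc 2 * e * w + e < 2 * e * w + 2 * e := by omega
    _ = 2 * e * (w + 1) := by ring
    _ ≤ 2 * e * M := Nat.mul_le_mul_left _ hw

/-- For `2*e ∣ L`, the conditional block swap commutes with `+ e` on multiples of `2*e`,
and preserves divisibility by `2*e`. -/
lemma swapAt_add {L e : ℕ} (hL : 0 < L) (he : 0 < e) (hdvd : 2 * e ∣ L) (b : ℕ → Bool)
    {x : ℕ} (hx : 2 * e ∣ x) :
    swapAt L b (x + e) = swapAt L b x + e ∧ 2 * e ∣ swapAt L b x := by
  have h2L : 0 < 2 * L := by omega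
  have h2e2L : 2 * e ∣ 2 * L := Dvd.dvd.mul_left hdvd 2
  have heL : 2 * e ≤ L := Nat.le_of_dvd hL hdvd
  have hrd : 2 * e ∣ x % (2 * L) := (Nat.dvd_mod_iff h2e2L).2 hx
  have hrlt : x % (2 * L) < 2 * L := Nat.mod_lt _ h2L
  have hre : x % (2 * L) + e < 2 * L := add_lt_of_dvd he h2e2L hrd hrlt
  have hmod : (x + e) % (2 * L) = x % (2 * L) + e := by
    rw [Nat.add_mod, Nat.mod_eq_of_lt (show e < 2 * L by omega),
      Nat.mod_eq_of_lt hre]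
  have hdiv : (x + e) / (2 * L) = x / (2 * L) := by
    conv_lhs => rw [← Nat.div_add_mod x (2 * L), add_assoc]
    rw [Nat.mul_add_div h2L, Nat.div_eq_of_lt hre, add_zero]
  -- the rotation step
  have hrot : ∀ r : ℕ, 2 * e ∣ r → r < 2 * L →
      (r + e + L) % (2 * L) = (r + L) % (2 * L) + e ∧ 2 * e ∣ (r + L) % (2 * L) := by
    intro r hr hrL
    have hdL : 2 * e ∣ r + L := Nat.dvd_add hr hdvd
    by_cases hcase : r + L < 2 * L
    · have h1 : (r + L) % (2 * L) = r + L := Nat.mod_eq_of_lt hcase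
      have h2 : r + e + L < 2 * L := by
        have := add_lt_of_dvd he h2e2L hdL hcase; omega
      rw [h1, Nat.mod_eq_of_lt h2]
      exact ⟨by omega, h1 ▸ hdL⟩
    · push_neg at hcase
      have h1 : (r + L) % (2 * L) = r + L - (2 * L) := by
        rw [Nat.mod_eq_sub_mod hcase, Nat.mod_eq_of_lt (by omega)]
      have hdL' : 2 * e ∣ r + L - 2 * L := Nat.dvd_sub hdL h2e2L
      have h3 : r + L - 2 * L + e < 2 * L := by
        have := add_lt_of_dvd he h2e2L hdL' (show r + L - 2*L < 2*L by omega); omega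
      have h2 : (r + e + L) % (2 * L) = r + e + L - 2 * L := by
        rw [Nat.mod_eq_sub_mod (by omega), Nat.mod_eq_of_lt (by omega)]
      rw [h1, h2]
      exact ⟨by omega, h1 ▸ hdL'⟩
  unfold swapAt
  rw [hmod, hdiv]
  split
  · obtain ⟨h1, h2⟩ := hrot (x % (2 * L)) hrd hrlt
    constructor
    · rw [h1]; omega
    · exact Nat.dvd_add (Dvd.dvd.mul_right h2e2L _) h2
  · exact ⟨rfl, hx⟩

/-- Values of the conditional swap on a level-`l` pair. -/
lemma swapAt_pair0 {L : ℕ} (hL : 0 < L) (b : ℕ → Bool) (m : ℕ) :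
    swapAt L b (2 * L * m) = if b m then 2 * L * m + L else 2 * L * m := by
  have hq : 2 * L * m / (2 * L) = m := Nat.mul_div_cancel_left m (by omega)
  have hr : 2 * L * m % (2 * L) = 0 := Nat.mul_mod_right _ _
  unfold swapAt
  rw [hq, hr, Nat.zero_add, Nat.mod_eq_of_lt (by omega)]

lemma swapAt_pair1 {L : ℕ} (hL : 0 < L) (b : ℕ → Bool) (m : ℕ) :
    swapAt L b (2 * L * m + L) = if b m then 2 * L * m else 2 * L * m + L := by
  have hq : (2 * L * m + L) / (2 * L) = m := by
    rw [Nat.mul_add_div (by omega), Nat.div_eq_of_lt (by omega), add_zero]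
  have hr : (2 * L * m + L) % (2 * L) = L := by
    rw [Nat.mul_add_mod, Nat.mod_eq_of_lt (by omega)]
  unfold swapAt
  rw [hq, hr, show L + L = 2 * L by ring, Nat.mod_self, add_zero]

lemma two_mul_pow (l : ℕ) : 2 * 2 ^ l = 2 ^ (l + 1) := by rw [pow_succ]; ring

variable {n : ℕ}

/-- The single-level condition, stated via divisibility. -/
def Cond (n j : ℕ) (π : Equiv.Perm (Fin (2 ^ n))) : Prop :=
  ∀ a : ℕ, 2 ^ (j + 1) ∣ a → ∀ (h1 : a < 2 ^ n) (h2 : a + 2 ^ j < 2 ^ n),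
    π ⟨a, h1⟩ < π ⟨a + 2 ^ j, h2⟩

/-- All conditions at levels `< m`. -/
def Q (n m : ℕ) (π : Equiv.Perm (Fin (2 ^ n))) : Prop := ∀ j, j < m → Cond n j π

/-- The block-swapping permutation at level `l`. -/
noncomputable def wperm (n l : ℕ) (hl : l < n) (b : ℕ → Bool) : Equiv.Perm (Fin (2 ^ n)) :=
  Function.Involutive.toPerm
    (fun x => ⟨swapAt (2 ^ l) b x.1,
      swapAt_lt (pow_pos two_pos l) (by rw [two_mul_pow]; exact pow_dvd_pow 2 hl) b x.2⟩)
    (fun x => Fin.ext (swapAt_invol (pow_pos two_pos l) b x.1))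

lemma wperm_apply {l : ℕ} (hl : l < n) (b : ℕ → Bool) (x : Fin (2 ^ n)) :
    (wperm n l hl b x : ℕ) = swapAt (2 ^ l) b x.1 := rfl

lemma wperm_mul_self {l : ℕ} (hl : l < n) (b : ℕ → Bool) :
    wperm n l hl b * wperm n l hl b = 1 := by
  apply Equiv.ext
  intro x
  rw [Equiv.Perm.mul_apply]
  exact Fin.ext (swapAt_invol (pow_pos two_pos l) b x.1)

lemma cond_w {l j : ℕ} (hl : l < n) (hj : j < l) (b : ℕ → Bool)
    {π : Equiv.Perm (Fin (2 ^ n))} (H : Cond n j π) :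
    Cond n j (π * wperm n l hl b) := by
  intro a hdvd h1 h2
  have he : (0:ℕ) < 2 ^ j := pow_pos two_pos j
  have hL : (0:ℕ) < 2 ^ l := pow_pos two_pos l
  have h2e : 2 * 2 ^ j = 2 ^ (j + 1) := two_mul_pow j
  have hdvdL : 2 * 2 ^ j ∣ 2 ^ l := by rw [h2e]; exact pow_dvd_pow 2 hj
  have hdvd' : 2 * 2 ^ j ∣ a := by rw [h2e]; exact hdvd
  have hdN : 2 * 2 ^ l ∣ 2 ^ n := by rw [two_mul_pow]; exact pow_dvd_pow 2 hl
  obtain ⟨hadd, hdvds⟩ := swapAt_add hL he hdvdL b hdvd'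
  have hs1 : swapAt (2 ^ l) b a < 2 ^ n := swapAt_lt hL hdN b h1
  have hdvdN : 2 * 2 ^ j ∣ 2 ^ n := by rw [h2e]; exact pow_dvd_pow 2 (by omega)
  have hs2 : swapAt (2 ^ l) b a + 2 ^ j < 2 ^ n := add_lt_of_dvd he hdvdN hdvds hs1
  have key := H (swapAt (2 ^ l) b a) (by rw [← h2e]; exact hdvds) hs1 hs2
  rw [Equiv.Perm.mul_apply, Equiv.Perm.mul_apply]
  have e1 : wperm n l hl b ⟨a, h1⟩ = ⟨swapAt (2 ^ l) b a, hs1⟩ := Fin.ext rfl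
  have e2 : wperm n l hl b ⟨a + 2 ^ j, h2⟩ = ⟨swapAt (2 ^ l) b a + 2 ^ j, hs2⟩ :=
    Fin.ext hadd
  rw [e1, e2]
  exact key

lemma cond_w_iff {l j : ℕ} (hl : l < n) (hj : j < l) (b : ℕ → Bool)
    (π : Equiv.Perm (Fin (2 ^ n))) :
    Cond n j (π * wperm n l hl b) ↔ Cond n j π := by
  constructor
  · intro H
    have := cond_w hl hj b H
    rwa [mul_assoc, wperm_mul_self, mul_one] at this
  · exact cond_w hl hj b

lemma pos1_lt {l m : ℕ} (hl : l < n) (hm : m < 2 ^ (n - 1 - l)) :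
    2 * 2 ^ l * m + 2 ^ l < 2 ^ n := by
  have hsplit : 2 ^ n = 2 * 2 ^ l * 2 ^ (n - 1 - l) := by
    rw [two_mul_pow, ← pow_add]
    congr 1
    omega
  have hL : (0:ℕ) < 2 ^ l := pow_pos two_pos l
  calc 2 * 2 ^ l * m + 2 ^ l < 2 * 2 ^ l * m + 2 * 2 ^ l := by omega
    _ = 2 * 2 ^ l * (m + 1) := by ring
    _ ≤ 2 * 2 ^ l * 2 ^ (n - 1 - l) := Nat.mul_le_mul_left _ hm
    _ = 2 ^ n := hsplit.symm

lemma pos0_lt {l m : ℕ} (hl : l < n) (hm : m < 2 ^ (n - 1 - l)) :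
    2 * 2 ^ l * m < 2 ^ n := by
  have := pos1_lt hl hm
  have hL : (0:ℕ) < 2 ^ l := pow_pos two_pos l
  omega

/-- Translate the statement's form of the conditions to `Cond`. -/
lemma cond_iff {j : ℕ} (hj : j < n) (π : Equiv.Perm (Fin (2 ^ n))) :
    (∀ k : ℕ, k < 2 ^ (n - 1 - j) →
      ∀ (h1 : 2 * k * 2 ^ j < 2 ^ n) (h2 : (2 * k + 1) * 2 ^ j < 2 ^ n),
        π ⟨2 * k * 2 ^ j, h1⟩ < π ⟨(2 * k + 1) * 2 ^ j, h2⟩) ↔ Cond n j π := by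
  have hsplit : 2 ^ n = 2 ^ (j + 1) * 2 ^ (n - 1 - j) := by
    rw [← pow_add]; congr 1; omega
  constructor
  · intro H a hdvd h1 h2
    obtain ⟨k, rfl⟩ := hdvd
    have e1 : 2 * k * 2 ^ j = 2 ^ (j + 1) * k := by rw [pow_succ]; ring
    have e2 : (2 * k + 1) * 2 ^ j = 2 ^ (j + 1) * k + 2 ^ j := by rw [pow_succ]; ring
    have hk : k < 2 ^ (n - 1 - j) := by
      by_contra hk
      push_neg at hk
      have : 2 ^ (j + 1) * 2 ^ (n - 1 - j) ≤ 2 ^ (j + 1) * k := Nat.mul_le_mul_left _ hk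
      omega
    have h1' : 2 * k * 2 ^ j < 2 ^ n := by rw [e1]; exact h1
    have h2' : (2 * k + 1) * 2 ^ j < 2 ^ n := by rw [e2]; exact h2
    have key := H k hk h1' h2'
    have f1 : (⟨2 ^ (j + 1) * k, h1⟩ : Fin (2 ^ n)) = ⟨2 * k * 2 ^ j, h1'⟩ :=
      Fin.ext e1.symm
    have f2 : (⟨2 ^ (j + 1) * k + 2 ^ j, h2⟩ : Fin (2 ^ n)) = ⟨(2 * k + 1) * 2 ^ j, h2'⟩ :=
      Fin.ext e2.symm
    rw [f1, f2]
    exact key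
  · intro H k hk h1 h2
    have e1 : 2 * k * 2 ^ j = 2 ^ (j + 1) * k := by rw [pow_succ]; ring
    have e2 : (2 * k + 1) * 2 ^ j = 2 ^ (j + 1) * k + 2 ^ j := by rw [pow_succ]; ring
    have h1' : 2 ^ (j + 1) * k < 2 ^ n := by rw [← e1]; exact h1
    have h2' : 2 ^ (j + 1) * k + 2 ^ j < 2 ^ n := by rw [← e2]; exact h2
    have key := H (2 ^ (j + 1) * k) ⟨k, rfl⟩ h1' h2'
    have f1 : (⟨2 * k * 2 ^ j, h1⟩ : Fin (2 ^ n)) = ⟨2 ^ (j + 1) * k, h1'⟩ := Fin.ext e1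
    have f2 : (⟨(2 * k + 1) * 2 ^ j, h2⟩ : Fin (2 ^ n)) = ⟨2 ^ (j + 1) * k + 2 ^ j, h2'⟩ :=
      Fin.ext e2
    rw [f1, f2]
    exact key


/-- Extend bits on `Fin` to `ℕ`. -/
def bext (n l : ℕ) (b : Fin (2 ^ (n - 1 - l)) → Bool) : ℕ → Bool :=
  fun m => if h : m < 2 ^ (n - 1 - l) then b ⟨m, h⟩ else false

lemma w_p0 {l : ℕ} (hl : l < n) (b : ℕ → Bool) {m : ℕ}
    (h0 : 2 * 2 ^ l * m < 2 ^ n) (h1 : 2 * 2 ^ l * m + 2 ^ l < 2 ^ n) :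
    wperm n l hl b ⟨2 * 2 ^ l * m, h0⟩ =
      if b m then (⟨2 * 2 ^ l * m + 2 ^ l, h1⟩ : Fin (2 ^ n)) else ⟨2 * 2 ^ l * m, h0⟩ := by
  apply Fin.ext
  have key := swapAt_pair0 (L := 2 ^ l) (pow_pos two_pos l) b m
  by_cases hb : b m = true <;>
    simp only [wperm_apply, key, hb, if_true, if_false, Bool.false_eq_true] <;> simp [hb]

lemma w_p1 {l : ℕ} (hl : l < n) (b : ℕ → Bool) {m : ℕ}
    (h0 : 2 * 2 ^ l * m < 2 ^ n) (h1 : 2 * 2 ^ l * m + 2 ^ l < 2 ^ n) :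
    wperm n l hl b ⟨2 * 2 ^ l * m + 2 ^ l, h1⟩ =
      if b m then (⟨2 * 2 ^ l * m, h0⟩ : Fin (2 ^ n)) else ⟨2 * 2 ^ l * m + 2 ^ l, h1⟩ := by
  apply Fin.ext
  have key := swapAt_pair1 (L := 2 ^ l) (pow_pos two_pos l) b m
  by_cases hb : b m = true <;>
    simp only [wperm_apply, key, hb, if_true, if_false, Bool.false_eq_true] <;> simp [hb]

lemma q_pair {l : ℕ} {π : Equiv.Perm (Fin (2 ^ n))} (H : Cond n l π) {m : ℕ}
    (h0 : 2 * 2 ^ l * m < 2 ^ n) (h1 : 2 * 2 ^ l * m + 2 ^ l < 2 ^ n) :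
    π ⟨2 * 2 ^ l * m, h0⟩ < π ⟨2 * 2 ^ l * m + 2 ^ l, h1⟩ := by
  have e : 2 * 2 ^ l * m = 2 ^ (l + 1) * m := by rw [pow_succ]; ring
  have h0' : 2 ^ (l + 1) * m < 2 ^ n := by rw [← e]; exact h0
  have h1' : 2 ^ (l + 1) * m + 2 ^ l < 2 ^ n := by rw [← e]; exact h1
  have key := H (2 ^ (l + 1) * m) ⟨m, rfl⟩ h0' h1'
  have f1 : (⟨2 * 2 ^ l * m, h0⟩ : Fin (2 ^ n)) = ⟨2 ^ (l + 1) * m, h0'⟩ := Fin.ext e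
  have f2 : (⟨2 * 2 ^ l * m + 2 ^ l, h1⟩ : Fin (2 ^ n)) = ⟨2 ^ (l + 1) * m + 2 ^ l, h1'⟩ :=
    Fin.ext (congrArg (fun t => t + 2 ^ l) e)
  rw [f1, f2]
  exact key

/-- The bits recovering a permutation from its normal form. -/
def bitsOf {l : ℕ} (hl : l < n) (σ : Equiv.Perm (Fin (2 ^ n))) :
    Fin (2 ^ (n - 1 - l)) → Bool :=
  fun m => decide (σ ⟨2 * 2 ^ l * m.1 + 2 ^ l, pos1_lt hl m.2⟩ <
    σ ⟨2 * 2 ^ l * m.1, pos0_lt hl m.2⟩)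

lemma cond_l_norm {l : ℕ} (hl : l < n) (σ : Equiv.Perm (Fin (2 ^ n))) :
    Cond n l (σ * wperm n l hl (bext n l (bitsOf hl σ))) := by
  intro a hdvd h1 h2
  obtain ⟨m, rfl⟩ := hdvd
  have e : 2 ^ (l + 1) * m = 2 * 2 ^ l * m := by rw [pow_succ]; ring
  have hsplit : 2 ^ n = 2 ^ (l + 1) * 2 ^ (n - 1 - l) := by
    rw [← pow_add]; congr 1; omega
  have hm : m < 2 ^ (n - 1 - l) := by
    by_contra hk
    push_neg at hk
    have : 2 ^ (l + 1) * 2 ^ (n - 1 - l) ≤ 2 ^ (l + 1) * m := Nat.mul_le_mul_left _ hk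
    omega
  have h0' : 2 * 2 ^ l * m < 2 ^ n := by rw [← e]; exact h1
  have h1' : 2 * 2 ^ l * m + 2 ^ l < 2 ^ n := by rw [← e]; exact h2
  set b := bext n l (bitsOf hl σ) with hbdef
  have hbm : b m = bitsOf hl σ ⟨m, hm⟩ := dif_pos hm
  have f1 : (⟨2 ^ (l + 1) * m, h1⟩ : Fin (2 ^ n)) = ⟨2 * 2 ^ l * m, h0'⟩ := Fin.ext e
  have f2 : (⟨2 ^ (l + 1) * m + 2 ^ l, h2⟩ : Fin (2 ^ n)) =
      ⟨2 * 2 ^ l * m + 2 ^ l, h1'⟩ := Fin.ext (congrArg (fun t => t + 2 ^ l) e)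
  rw [Equiv.Perm.mul_apply, Equiv.Perm.mul_apply, f1, f2,
    w_p0 hl b h0' h1', w_p1 hl b h0' h1', hbm]
  by_cases hd : σ ⟨2 * 2 ^ l * m + 2 ^ l, pos1_lt hl hm⟩ < σ ⟨2 * 2 ^ l * m, pos0_lt hl hm⟩
  · have : bitsOf hl σ ⟨m, hm⟩ = true := decide_eq_true hd
    rw [this, if_pos rfl, if_pos rfl]
    exact hd
  · have : bitsOf hl σ ⟨m, hm⟩ = false := decide_eq_false hd
    rw [this]
    simp only [Bool.false_eq_true, if_false]
    have hne : (⟨2 * 2 ^ l * m, h0'⟩ : Fin (2 ^ n)) ≠ ⟨2 * 2 ^ l * m + 2 ^ l, h1'⟩ := by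
      have hL : (0:ℕ) < 2 ^ l := pow_pos two_pos l
      simp only [ne_eq, Fin.mk.injEq]
      omega
    have hle : σ ⟨2 * 2 ^ l * m, h0'⟩ ≤ σ ⟨2 * 2 ^ l * m + 2 ^ l, h1'⟩ := not_lt.1 hd
    exact lt_of_le_of_ne hle (fun hc => hne (σ.injective hc))

/-- The key equivalence: adding level-`l` conditions halves blocks. -/
noncomputable def levelEquiv (n l : ℕ) (hl : l < n) :
    {π : Equiv.Perm (Fin (2 ^ n)) // Q n (l + 1) π} × (Fin (2 ^ (n - 1 - l)) → Bool) ≃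
      {π : Equiv.Perm (Fin (2 ^ n)) // Q n l π} where
  toFun p := ⟨p.1.1 * wperm n l hl (bext n l p.2), fun j hj =>
    cond_w hl hj _ (p.1.2 j (by omega))⟩
  invFun σ := (⟨σ.1 * wperm n l hl (bext n l (bitsOf hl σ.1)), by
      intro j hj
      rcases Nat.lt_succ_iff_lt_or_eq.1 hj with h | rfl
      · exact cond_w hl h _ (σ.2 j h)
      · exact cond_l_norm hl σ.1⟩, bitsOf hl σ.1)
  left_inv := by
    rintro ⟨⟨π, hπ⟩, b⟩
    have hbits : bitsOf hl (π * wperm n l hl (bext n l b)) = b := by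
      funext m
      obtain ⟨m, hm⟩ := m
      have h0' := pos0_lt hl hm
      have h1' := pos1_lt hl hm
      have hbm : bext n l b m = b ⟨m, hm⟩ := dif_pos hm
      have hpair := q_pair (hπ l (Nat.lt_succ_self l)) h0' h1'
      show decide _ = b ⟨m, hm⟩
      rw [Equiv.Perm.mul_apply, Equiv.Perm.mul_apply,
        w_p0 hl _ (pos0_lt hl hm) (pos1_lt hl hm),
        w_p1 hl _ (pos0_lt hl hm) (pos1_lt hl hm), hbm]
      cases hb : b ⟨m, hm⟩
      · simp only [Bool.false_eq_true, if_false]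
        exact decide_eq_false (not_lt.2 (le_of_lt hpair))
      · simp only [if_true]
        exact decide_eq_true hpair
    simp only [Prod.mk.injEq]
    constructor
    · apply Subtype.ext
      show (π * wperm n l hl (bext n l b)) * wperm n l hl (bext n l (bitsOf hl _)) = π
      rw [hbits, mul_assoc, wperm_mul_self, mul_one]
    · exact hbits
  right_inv := by
    rintro ⟨σ, hσ⟩
    apply Subtype.ext
    show (σ * wperm n l hl _) * wperm n l hl _ = σ
    rw [mul_assoc, wperm_mul_self, mul_one]

lemma card_Q (n : ℕ) : ∀ l, l ≤ n →
    Nat.card {π : Equiv.Perm (Fin (2 ^ n)) // Q n l π} * 2 ^ (2 ^ n - 2 ^ (n - l)) =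
      Nat.factorial (2 ^ n) := by
  intro l
  induction l with
  | zero =>
    intro _
    have he : {π : Equiv.Perm (Fin (2 ^ n)) // Q n 0 π} ≃ Equiv.Perm (Fin (2 ^ n)) :=
      Equiv.subtypeUnivEquiv (fun π j hj => absurd hj (Nat.not_lt_zero j))
    rw [Nat.card_congr he, Nat.card_eq_fintype_card, Fintype.card_perm, Fintype.card_fin]
    simp
  | succ l ih =>
    intro hln
    have hl : l < n := hln
    have he := Nat.card_congr (levelEquiv n l hl)
    rw [Nat.card_prod, Nat.card_eq_fintype_card (α := Fin (2 ^ (n - 1 - l)) → Bool),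
      Fintype.card_fun, Fintype.card_bool, Fintype.card_fin] at he
    have h1 : n - l = (n - (l + 1)) + 1 := by omega
    have h2 : 2 ^ (n - l) = 2 * 2 ^ (n - (l + 1)) := by rw [h1, pow_succ]; ring
    have h3 : 2 ^ (n - l) ≤ 2 ^ n := Nat.pow_le_pow_right (by norm_num) (by omega)
    have h4 : n - 1 - l = n - (l + 1) := by omega
    have h5 : (0:ℕ) < 2 ^ (n - (l + 1)) := pow_pos two_pos _
    have hE : 2 ^ n - 2 ^ (n - (l + 1)) = 2 ^ (n - 1 - l) + (2 ^ n - 2 ^ (n - l)) := by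
      rw [h4]; omega
    rw [hE, pow_add, ← mul_assoc, he]
    exact ih (by omega)

end SylowCC

/-- **Coset representatives of a Sylow 2-subgroup of `Sym(2^n)`**: the number of
permutations `π` of `{0, 1, …, 2^n - 1}` satisfying
`π(2k·2^l) < π((2k+1)·2^l)` for all `0 ≤ l ≤ n-1` and `0 ≤ k ≤ 2^{n-1-l} - 1`
(the 0-based version of the conditions of the paper) equals
`(2^n)! / 2^(2^n - 1)`, the index of a Sylow 2-subgroup of `Sym(2^n)`. -/
theorem sylow_coset_count (n : ℕ) (hn : 1 ≤ n) :
    Nat.card {π : Equiv.Perm (Fin (2 ^ n)) //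
        ∀ l : ℕ, l < n → ∀ k : ℕ, k < 2 ^ (n - 1 - l) →
          ∀ (h1 : 2 * k * 2 ^ l < 2 ^ n) (h2 : (2 * k + 1) * 2 ^ l < 2 ^ n),
            π ⟨2 * k * 2 ^ l, h1⟩ < π ⟨(2 * k + 1) * 2 ^ l, h2⟩} =
      Nat.factorial (2 ^ n) / 2 ^ (2 ^ n - 1) := by
  have hcongr : Nat.card {π : Equiv.Perm (Fin (2 ^ n)) //
        ∀ l : ℕ, l < n → ∀ k : ℕ, k < 2 ^ (n - 1 - l) →
          ∀ (h1 : 2 * k * 2 ^ l < 2 ^ n) (h2 : (2 * k + 1) * 2 ^ l < 2 ^ n),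
            π ⟨2 * k * 2 ^ l, h1⟩ < π ⟨(2 * k + 1) * 2 ^ l, h2⟩} =
      Nat.card {π : Equiv.Perm (Fin (2 ^ n)) // SylowCC.Q n n π} := by
    apply Nat.card_congr
    apply Equiv.subtypeEquivRight
    intro π
    constructor
    · intro H j hj
      exact (SylowCC.cond_iff hj π).1 (H j hj)
    · intro H j hj
      exact (SylowCC.cond_iff hj π).2 (H j hj)
  have key := SylowCC.card_Q n n le_rfl
  rw [Nat.sub_self, pow_zero] at key
  rw [hcongr, ← key]
  exact (Nat.mul_div_cancel _ (pow_pos two_pos _)).symm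
end
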